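/- arXiv:2012.06247 — 5 statements merged into one kernel-verified Lean document; each statement's English description precedes it below -/
import Mathlib

section
/- Let d ≥ 1 and let γ(n) = (P_1(n),…,P_d(n)) be a polynomial curve in ℤ^d with separated degrees, and assume γ is not a single linear polynomial (i.e., it is not the case that d = 1 and deg P_1 = 1). Then for every ε > 0 there exists a constant C = C(γ, ε) > 0 such that for every integer N ≥ 1 and all finite sets E, F ⊆ ℤ^d, #{(x,n) ∈ F × {1,…,N} : x − γ(n) ∈ E} ≤ C · N^{1/3+ε} · |E|^{2/3} · |F|^{2/3} (equivalently, ⟨𝒜_N 1_E, 1_F⟩ ≤ C N^{−2/3+ε} |E|^{2/3} |F|^{2/3}). -/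
open Finset Polynomial


/-- Linear beats geometric: `a+1 ≤ C * (2^δ)^a`. -/
lemma aux_lin_le_geom (δ : ℝ) (hδ : 0 < δ) :
    ∃ C : ℝ, 1 ≤ C ∧ ∀ a : ℕ, (a + 1 : ℝ) ≤ C * ((2:ℝ) ^ δ) ^ a := by
  set r : ℝ := min ((2:ℝ) ^ δ) 2 with hr
  have h2δ : 1 < (2:ℝ) ^ δ :=
    (Real.one_lt_rpow_iff_of_pos (by norm_num)).mpr (Or.inl ⟨one_lt_two, hδ⟩)
  have hr1 : 1 < r := lt_min h2δ (by norm_num)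
  have hr2 : r ≤ 2 := min_le_right _ _
  refine ⟨max 1 (1 / (r - 1)), le_max_left _ _, fun a => ?_⟩
  have hber : 1 + (a:ℝ) * (r - 1) ≤ r ^ a := by
    have h := one_add_mul_le_pow (a := r - 1) (by linarith) a
    calc (1:ℝ) + a * (r-1) ≤ (1 + (r-1))^a := h
      _ = r ^ a := by ring_nf
  have hra : (r - 1) * (a + 1 : ℝ) ≤ r ^ a := by
    nlinarith [hber, hr1, hr2, Nat.cast_nonneg (α := ℝ) a]
  have h1 : (a + 1 : ℝ) ≤ (1 / (r - 1)) * r ^ a := by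
    rw [div_mul_eq_mul_div, le_div_iff₀ (by linarith)]; linarith [hra]
  have hrle : r ^ a ≤ ((2:ℝ) ^ δ) ^ a :=
    pow_le_pow_left₀ (by linarith) (min_le_left _ _) a
  calc (a + 1 : ℝ) ≤ (1 / (r - 1)) * r ^ a := h1
    _ ≤ max 1 (1 / (r - 1)) * ((2:ℝ) ^ δ) ^ a := by
        apply mul_le_mul (le_max_right _ _) hrle (by positivity)
        positivity

/-- The divisor bound: for every `δ > 0` there is `C ≥ 1` with `τ(n) ≤ C n^δ`. -/
lemma divisor_bound (δ : ℝ) (hδ : 0 < δ) :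
    ∃ C : ℝ, 1 ≤ C ∧ ∀ n : ℕ, n ≠ 0 → (n.divisors.card : ℝ) ≤ C * (n:ℝ) ^ δ := by
  obtain ⟨C0, hC01, hC0⟩ := aux_lin_le_geom δ hδ
  set B : ℕ := ⌈(2:ℝ) ^ (1/δ)⌉₊ with hB
  refine ⟨C0 ^ (B+1), one_le_pow₀ hC01, fun n hn => ?_⟩
  have hcard : (n.divisors.card : ℝ) =
      ∏ p ∈ n.primeFactors, ((n.factorization p : ℝ) + 1) := by
    rw [Nat.card_divisors hn]
    push_cast
    rfl
  have hselfN : ∏ p ∈ n.primeFactors, p ^ n.factorization p = n :=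
    Nat.factorization_prod_pow_eq_self hn
  have hself : ∏ p ∈ n.primeFactors, ((p:ℝ) ^ (n.factorization p : ℕ)) = (n:ℝ) := by
    exact_mod_cast congrArg (Nat.cast : ℕ → ℝ) hselfN
  have hrpow : (n:ℝ) ^ δ = ∏ p ∈ n.primeFactors, ((p:ℝ) ^ (δ * (n.factorization p : ℕ))) := by
    rw [← hself, ← Real.finset_prod_rpow _ _ (fun i _ => by positivity) δ]
    refine Finset.prod_congr rfl fun p hp => ?_
    rw [← Real.rpow_natCast (p:ℝ) (n.factorization p), ← Real.rpow_mul (by positivity)]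
    rw [mul_comm]
  -- termwise bound
  have hterm : ∀ p ∈ n.primeFactors, ((n.factorization p : ℝ) + 1) ≤
      (if p ≤ B then C0 else 1) * (p:ℝ) ^ (δ * (n.factorization p : ℕ)) := by
    intro p hp
    have hp2 : 2 ≤ p := (Nat.prime_of_mem_primeFactors hp).two_le
    set a : ℕ := n.factorization p
    by_cases hpB : p ≤ B
    · simp only [hpB, if_true]
      have h2p : ((2:ℝ) ^ δ) ^ a ≤ (p:ℝ) ^ (δ * a) := by
        rw [← Real.rpow_natCast ((2:ℝ)^δ) a, ← Real.rpow_mul (by norm_num)]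
        exact Real.rpow_le_rpow (by norm_num) (by exact_mod_cast hp2) (by positivity)
      calc ((a:ℝ) + 1) ≤ C0 * ((2:ℝ)^δ)^a := hC0 a
        _ ≤ C0 * (p:ℝ) ^ (δ * a) := by
            apply mul_le_mul_of_nonneg_left h2p (by linarith)
    · simp only [hpB, if_false, one_mul]
      -- p > B implies p^δ ≥ 2
      have hpB' : (2:ℝ) ^ (1/δ) ≤ (p:ℝ) := by
        calc (2:ℝ) ^ (1/δ) ≤ (B:ℝ) := Nat.le_ceil _
          _ ≤ (p:ℝ) := by exact_mod_cast le_of_lt (not_le.mp hpB)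
      have h2p : (2:ℝ) ≤ (p:ℝ) ^ δ := by
        have := Real.rpow_le_rpow (by positivity) hpB' (le_of_lt hδ)
        rwa [← Real.rpow_mul (by norm_num), one_div_mul_cancel (ne_of_gt hδ), Real.rpow_one] at this
      calc ((a:ℝ) + 1) ≤ (2:ℝ) ^ a := by
            have := a.lt_two_pow_self
            push_cast
            exact_mod_cast Nat.succ_le_of_lt this
        _ ≤ ((p:ℝ) ^ δ) ^ a := pow_le_pow_left₀ (by norm_num) h2p a
        _ = (p:ℝ) ^ (δ * a) := by
            rw [← Real.rpow_natCast ((p:ℝ)^δ) a, ← Real.rpow_mul (by positivity)]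
  calc (n.divisors.card : ℝ) = ∏ p ∈ n.primeFactors, ((n.factorization p : ℝ) + 1) := hcard
    _ ≤ ∏ p ∈ n.primeFactors, ((if p ≤ B then C0 else 1) * (p:ℝ) ^ (δ * (n.factorization p : ℕ))) := by
        apply Finset.prod_le_prod (fun p _ => by positivity) hterm
    _ = (∏ p ∈ n.primeFactors, (if p ≤ B then C0 else 1)) * ∏ p ∈ n.primeFactors, (p:ℝ) ^ (δ * (n.factorization p : ℕ)) := by
        rw [Finset.prod_mul_distrib]
    _ ≤ C0 ^ (B+1) * (n:ℝ) ^ δ := by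
        rw [← hrpow]
        apply mul_le_mul_of_nonneg_right _ (by positivity)
        rw [Finset.prod_ite, Finset.prod_const, Finset.prod_const, one_pow, mul_one]
        have hsub : n.primeFactors.filter (fun p => p ≤ B) ⊆ Finset.range (B+1) := by
          intro x hx
          simp only [Finset.mem_filter] at hx
          exact Finset.mem_range.mpr (Nat.lt_succ_of_le hx.2)
        calc C0 ^ (n.primeFactors.filter (fun p => p ≤ B)).card
            ≤ C0 ^ (Finset.range (B+1)).card :=
              pow_le_pow_right₀ hC01 (Finset.card_le_card hsub)
          _ = C0 ^ (B+1) := by rw [Finset.card_range]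

/-- Root counting: a finset of roots of a nonzero polynomial has card ≤ natDegree. -/
lemma root_count (q : Polynomial ℤ) (hq : q ≠ 0) (s : Finset ℤ)
    (hs : ∀ n ∈ s, q.eval n = 0) : s.card ≤ q.natDegree := by
  have hsub : s ⊆ q.roots.toFinset := by
    intro n hn
    rw [Multiset.mem_toFinset, Polynomial.mem_roots hq]
    exact hs n hn
  calc s.card ≤ q.roots.toFinset.card := Finset.card_le_card hsub
    _ ≤ Multiset.card q.roots := Multiset.toFinset_card_le _
    _ ≤ q.natDegree := Polynomial.card_roots' q

/-- The difference polynomial `Q - Q∘(X - m) - w` is nonzero when `deg Q ≥ 2`, `m ≠ 0`. -/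
lemma qm_ne_zero (Q : Polynomial ℤ) (hK : 2 ≤ Q.natDegree) (m : ℤ) (hm : m ≠ 0) (w : ℤ) :
    Q - Q.comp (X - C m) - C w ≠ 0 := by
  intro h
  have hev : ∀ x : ℤ, Q.eval x = Q.eval (x - m) + w := by
    intro x
    have := congrArg (Polynomial.eval x) h
    simp [Polynomial.eval_sub, Polynomial.eval_comp] at this
    linarith
  have hstep : ∀ t : ℕ, Q.eval ((t:ℤ) * m) = Q.eval 0 + t * w := by
    intro t
    induction t with
    | zero => simp
    | succ k ih =>
        have := hev (((k:ℤ)+1) * m)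
        push_cast
        rw [show ((k:ℤ)+1) * m - m = (k:ℤ) * m by ring] at this
        push_cast at this ih ⊢
        rw [this, ih]; ring
  set R : Polynomial ℤ := Q.comp (C m * X) - (C (Q.eval 0) + C w * X) with hR
  have hRroot : ∀ t : ℕ, R.eval (t:ℤ) = 0 := by
    intro t
    simp only [hR, Polynomial.eval_sub, Polynomial.eval_comp, Polynomial.eval_add,
      Polynomial.eval_mul, Polynomial.eval_C, Polynomial.eval_X]
    rw [mul_comm m (t:ℤ), hstep t]; ring
  have hR0 : R = 0 := by
    apply Polynomial.eq_zero_of_infinite_isRoot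
    apply Set.infinite_of_injective_forall_mem (f := fun t : ℕ => (t:ℤ))
      Nat.cast_injective
    intro t
    exact hRroot t
  have hcomp : Q.comp (C m * X) = C (Q.eval 0) + C w * X := by
    have := sub_eq_zero.mp hR0
    linear_combination this
  have hdeg : (Q.comp (C m * X)).natDegree = Q.natDegree := by
    rw [Polynomial.natDegree_comp, Polynomial.natDegree_C_mul_X m hm, mul_one]
  have hdeg2 : (C (Q.eval 0) + C w * X).natDegree ≤ 1 := by
    apply le_trans (Polynomial.natDegree_add_le _ _)
    simp only [Polynomial.natDegree_C, Nat.max_le]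
    exact ⟨Nat.zero_le _, le_trans (Polynomial.natDegree_C_mul_le _ _) (by simp)⟩
  rw [hcomp] at hdeg
  omega

/-- Pair counting via the divisor trick. -/
lemma pair_count (d : ℕ) (P : Fin d → Polynomial ℤ) (jt : Fin d) (K : ℕ) (hK : 2 ≤ K)
    (hdeg : (P jt).natDegree = K) (N : ℕ) (v : Fin d → ℤ) (j0 : Fin d) (hj0 : v j0 ≠ 0) :
    ((Finset.Icc (1:ℤ) (N:ℤ) ×ˢ Finset.Icc (1:ℤ) (N:ℤ)).filter
        (fun pr => ∀ j, (P j).eval pr.1 - (P j).eval pr.2 = v j)).card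
      ≤ 2 * K * (v j0).natAbs.divisors.card := by
  classical
  set Q : Polynomial ℤ := P jt with hQ
  set w : ℤ := v jt with hw
  set D : Finset ℤ := ((v j0).natAbs.divisors).image (fun k : ℕ => (k:ℤ)) ∪
      ((v j0).natAbs.divisors).image (fun k : ℕ => -(k:ℤ)) with hD
  set f : ℤ → Finset (ℤ × ℤ) := fun m =>
    ((Finset.Icc (1:ℤ) (N:ℤ)).filter
      (fun n => (Q - Q.comp (X - C m) - C w).eval n = 0)).image (fun n => (n, n - m)) with hf
  have hmD : ∀ m ∈ D, m ≠ 0 := by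
    intro m hm
    simp only [hD, Finset.mem_union, Finset.mem_image] at hm
    rcases hm with ⟨k, hk, rfl⟩ | ⟨k, hk, rfl⟩ <;>
      simpa using (Nat.pos_of_mem_divisors hk).ne'
  have hsub : ((Finset.Icc (1:ℤ) (N:ℤ) ×ˢ Finset.Icc (1:ℤ) (N:ℤ)).filter
        (fun pr => ∀ j, (P j).eval pr.1 - (P j).eval pr.2 = v j)) ⊆ D.biUnion f := by
    rintro ⟨n, n'⟩ hmem
    rw [Finset.mem_filter, Finset.mem_product] at hmem
    obtain ⟨⟨hn, hn'⟩, hcond⟩ := hmem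
    set m : ℤ := n - n' with hm
    have hdvd : m ∣ v j0 := by
      rw [← hcond j0]
      exact Polynomial.sub_dvd_eval_sub n n' (P j0)
    have hm0 : m ≠ 0 := by
      intro h0
      apply hj0
      rw [← hcond j0, show n' = n by omega]
      ring
    have hmDmem : m ∈ D := by
      simp only [hD, Finset.mem_union, Finset.mem_image]
      have hdiv : m.natAbs ∈ (v j0).natAbs.divisors :=
        Nat.mem_divisors.mpr ⟨Int.natAbs_dvd_natAbs.mpr hdvd, Int.natAbs_ne_zero.mpr hj0⟩
      rcases Int.natAbs_eq m with h | h
      · exact Or.inl ⟨m.natAbs, hdiv, h.symm⟩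
      · exact Or.inr ⟨m.natAbs, hdiv, h.symm⟩
    apply Finset.mem_biUnion.mpr ⟨m, hmDmem, ?_⟩
    simp only [hf, Finset.mem_image, Finset.mem_filter]
    refine ⟨n, ⟨hn, ?_⟩, by simp [hm]⟩
    have : n - m = n' := by omega
    simp only [Polynomial.eval_sub, Polynomial.eval_comp, Polynomial.eval_X, Polynomial.eval_C,
      this]
    have h : (P jt).eval n - (P jt).eval n' = v jt := hcond jt
    rw [hQ, hw, ← h]; ring
  have hfcard : ∀ m ∈ D, (f m).card ≤ K := by
    intro m hm
    have hm0 := hmD m hm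
    calc (f m).card ≤ ((Finset.Icc (1:ℤ) (N:ℤ)).filter
        (fun n => (Q - Q.comp (X - C m) - C w).eval n = 0)).card := Finset.card_image_le
      _ ≤ (Q - Q.comp (X - C m) - C w).natDegree := by
          apply root_count _ (qm_ne_zero Q (hdeg ▸ hK) m hm0 w)
          intro n hn
          exact (Finset.mem_filter.mp hn).2
      _ ≤ K := by
          apply le_trans (Polynomial.natDegree_sub_le _ _)
          simp only [Polynomial.natDegree_C, Nat.max_le]
          constructor
          · apply le_trans (Polynomial.natDegree_sub_le _ _)
            simp only [Nat.max_le]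
            refine ⟨le_of_eq hdeg, ?_⟩
            rw [Polynomial.natDegree_comp, Polynomial.natDegree_X_sub_C, mul_one]
            exact le_of_eq hdeg
          · exact Nat.zero_le _
  calc ((Finset.Icc (1:ℤ) (N:ℤ) ×ˢ Finset.Icc (1:ℤ) (N:ℤ)).filter
        (fun pr => ∀ j, (P j).eval pr.1 - (P j).eval pr.2 = v j)).card
      ≤ (D.biUnion f).card := Finset.card_le_card hsub
    _ ≤ ∑ m ∈ D, (f m).card := Finset.card_biUnion_le
    _ ≤ ∑ _m ∈ D, K := Finset.sum_le_sum hfcard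
    _ = D.card * K := by rw [Finset.sum_const, smul_eq_mul]
    _ ≤ (2 * (v j0).natAbs.divisors.card) * K := by
        apply Nat.mul_le_mul_right
        apply le_trans (Finset.card_union_le _ _)
        rw [two_mul]
        exact Nat.add_le_add Finset.card_image_le Finset.card_image_le
    _ = 2 * K * (v j0).natAbs.divisors.card := by ring

lemma card_filter_product {α β : Type*} [DecidableEq α] [DecidableEq β]
    (A : Finset α) (I : Finset β) (p : α → β → Prop) [∀ x y, Decidable (p x y)] :
    ((A ×ˢ I).filter fun z => p z.1 z.2).card = ∑ x ∈ A, (I.filter (p x)).card := by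
  rw [Finset.card_filter, Finset.sum_product]
  exact Finset.sum_congr rfl fun x _ => (Finset.card_filter _ _).symm

lemma Icc_card (N : ℕ) : (Finset.Icc (1:ℤ) (N:ℤ)).card = N := by
  rw [Int.card_Icc]
  simp

/-- Energy (quadruple count) bound. -/
lemma energy_bound (d K N : ℕ) (P : Fin d → Polynomial ℤ) (jt : Fin d) (hK : 2 ≤ K)
    (hdeg : (P jt).natDegree = K) (M : ℝ) (hM0 : 0 ≤ M)
    (hM : ∀ v : Fin d → ℤ, v ≠ 0 →
      (((Finset.Icc (1:ℤ) (N:ℤ) ×ˢ Finset.Icc (1:ℤ) (N:ℤ)).filter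
        (fun pr => ∀ j, (P j).eval pr.1 - (P j).eval pr.2 = v j)).card : ℝ) ≤ M)
    (A : Finset (Fin d → ℤ)) :
    ((((A ×ˢ A) ×ˢ (Finset.Icc (1:ℤ) (N:ℤ) ×ˢ Finset.Icc (1:ℤ) (N:ℤ))).filter
        (fun z => ∀ j, z.1.1 j + (P j).eval z.2.1 = z.1.2 j + (P j).eval z.2.2)).card : ℝ)
      ≤ (K : ℝ) * N * A.card + M * (A.card : ℝ) ^ 2 := by
  classical
  set I := Finset.Icc (1:ℤ) (N:ℤ) with hI
  set En := (((A ×ˢ A) ×ˢ (I ×ˢ I)).filter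
      (fun z => ∀ j, z.1.1 j + (P j).eval z.2.1 = z.1.2 j + (P j).eval z.2.2)) with hEn
  have hsplit : En.card = (En.filter (fun z => z.1.1 = z.1.2)).card
      + (En.filter (fun z => ¬ z.1.1 = z.1.2)).card :=
    (Finset.card_filter_add_card_filter_not _).symm
  -- diagonal bound
  set G := ((I ×ˢ I).filter (fun w : ℤ × ℤ => (P jt).eval w.1 = (P jt).eval w.2)) with hG
  have hGcard : G.card ≤ N * K := by
    have hsub : G ⊆ I.biUnion (fun n' =>
        ((I.filter fun n => (P jt).eval n = (P jt).eval n').image (fun n => (n, n')))) := by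
      rintro ⟨n, n'⟩ hmem
      rw [hG, Finset.mem_filter, Finset.mem_product] at hmem
      exact Finset.mem_biUnion.mpr ⟨n', hmem.1.2,
        Finset.mem_image.mpr ⟨n, Finset.mem_filter.mpr ⟨hmem.1.1, hmem.2⟩, rfl⟩⟩
    apply le_trans (Finset.card_le_card hsub)
    apply le_trans Finset.card_biUnion_le
    apply le_trans (Finset.sum_le_sum (g := fun _ => K) ?_)
    · rw [Finset.sum_const, smul_eq_mul, Icc_card]
    · intro n' _
      apply le_trans Finset.card_image_le
      have hq : (P jt) - C ((P jt).eval n') ≠ 0 := by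
        intro h
        have h2 : P jt = C ((P jt).eval n') := by linear_combination h
        rw [h2, Polynomial.natDegree_C] at hdeg
        omega
      have := root_count _ hq ((I.filter fun n => (P jt).eval n = (P jt).eval n'))
        (fun n hn => by
          simp only [Polynomial.eval_sub, Polynomial.eval_C]
          have := (Finset.mem_filter.mp hn).2
          omega)
      apply le_trans this
      apply le_trans (Polynomial.natDegree_sub_le _ _)
      simp [hdeg]
  have hdiag : (En.filter (fun z => z.1.1 = z.1.2)).card ≤ A.card * (N * K) := by
    have hinj : ∀ z ∈ En.filter (fun z => z.1.1 = z.1.2), (z.1.1, z.2) ∈ A ×ˢ G := by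
      rintro ⟨⟨e, e'⟩, ⟨n, n'⟩⟩ hmem
      rw [Finset.mem_filter] at hmem
      obtain ⟨hmem, heq⟩ := hmem
      rw [hEn, Finset.mem_filter, Finset.mem_product, Finset.mem_product, Finset.mem_product]
        at hmem
      obtain ⟨⟨⟨he, he'⟩, hn, hn'⟩, hcond⟩ := hmem
      rw [Finset.mem_product]
      refine ⟨he, ?_⟩
      rw [hG, Finset.mem_filter, Finset.mem_product]
      refine ⟨⟨hn, hn'⟩, ?_⟩
      have hc : e jt + (P jt).eval n = e' jt + (P jt).eval n' := hcond jt
      have heq' : e = e' := heq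
      rw [heq'] at hc
      show (P jt).eval n = (P jt).eval n'
      omega
    calc (En.filter (fun z => z.1.1 = z.1.2)).card ≤ (A ×ˢ G).card := by
          apply Finset.card_le_card_of_injOn _ hinj
          rintro ⟨⟨e1, e1'⟩, w1⟩ h1 ⟨⟨e2, e2'⟩, w2⟩ h2 heq
          simp only [Prod.mk.injEq] at heq ⊢
          have hd1 := (Finset.mem_filter.mp h1).2
          have hd2 := (Finset.mem_filter.mp h2).2
          simp only at hd1 hd2
          exact ⟨⟨heq.1, by rw [← hd1, ← hd2, heq.1]⟩, heq.2⟩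
      _ = A.card * G.card := Finset.card_product _ _
      _ ≤ A.card * (N * K) := Nat.mul_le_mul_left _ hGcard
  -- off-diagonal bound
  have hoff : ((En.filter (fun z => ¬ z.1.1 = z.1.2)).card : ℝ) ≤ (A.card : ℝ)^2 * M := by
    set S2 := ((A ×ˢ A).filter fun ee : (Fin d → ℤ) × (Fin d → ℤ) => ee.1 ≠ ee.2) with hS2
    have hsub : En.filter (fun z => ¬ z.1.1 = z.1.2) ⊆ S2.biUnion (fun ee =>
        (((I ×ˢ I).filter (fun pr => ∀ j, (P j).eval pr.1 - (P j).eval pr.2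
            = ee.2 j - ee.1 j)).image (fun w => (ee, w)))) := by
      rintro ⟨⟨e, e'⟩, ⟨n, n'⟩⟩ hmem
      rw [Finset.mem_filter] at hmem
      obtain ⟨hmem, hne⟩ := hmem
      rw [hEn, Finset.mem_filter, Finset.mem_product, Finset.mem_product, Finset.mem_product]
        at hmem
      obtain ⟨⟨⟨he, he'⟩, hn, hn'⟩, hcond⟩ := hmem
      apply Finset.mem_biUnion.mpr
      refine ⟨(e, e'), ?_, ?_⟩
      · rw [hS2, Finset.mem_filter, Finset.mem_product]
        exact ⟨⟨he, he'⟩, hne⟩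
      · apply Finset.mem_image.mpr
        refine ⟨(n, n'), ?_, rfl⟩
        rw [Finset.mem_filter, Finset.mem_product]
        refine ⟨⟨hn, hn'⟩, fun j => ?_⟩
        have hc : e j + (P j).eval n = e' j + (P j).eval n' := hcond j
        show (P j).eval n - (P j).eval n' = e' j - e j
        omega
    calc ((En.filter (fun z => ¬ z.1.1 = z.1.2)).card : ℝ)
        ≤ ((S2.biUnion _).card : ℝ) := by exact_mod_cast Finset.card_le_card hsub
      _ ≤ ∑ ee ∈ S2, ((((I ×ˢ I).filter (fun pr => ∀ j, (P j).eval pr.1 - (P j).eval pr.2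
            = ee.2 j - ee.1 j)).image (fun w => (ee, w))).card : ℝ) := by
          exact_mod_cast Finset.card_biUnion_le
      _ ≤ ∑ _ee ∈ S2, M := by
          apply Finset.sum_le_sum
          intro ee hee
          apply le_trans _ (hM (fun j => ee.2 j - ee.1 j) ?_)
          · exact_mod_cast Nat.cast_le.mpr Finset.card_image_le
          · rw [hS2, Finset.mem_filter] at hee
            intro h0
            apply hee.2
            funext j
            have := congrFun h0 j
            simp at this
            omega
      _ = (S2.card : ℝ) * M := by rw [Finset.sum_const, nsmul_eq_mul]
      _ ≤ (A.card : ℝ)^2 * M := by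
          apply mul_le_mul_of_nonneg_right _ hM0
          have : S2.card ≤ (A ×ˢ A).card := Finset.card_le_card (Finset.filter_subset _ _)
          rw [Finset.card_product] at this
          exact_mod_cast le_trans this (le_of_eq (sq (A.card)).symm)
  calc (En.card : ℝ) = ((En.filter (fun z => z.1.1 = z.1.2)).card : ℝ)
        + ((En.filter (fun z => ¬ z.1.1 = z.1.2)).card : ℝ) := by exact_mod_cast hsplit
    _ ≤ (A.card : ℝ) * (N * K) + (A.card : ℝ)^2 * M := by
        apply add_le_add _ hoff
        exact_mod_cast hdiag
    _ = (K : ℝ) * N * A.card + M * (A.card : ℝ)^2 := by ring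

/-- Cauchy–Schwarz reduction to the energy. -/
lemma master_CS (d K N : ℕ) (P : Fin d → Polynomial ℤ)
    (E F : Finset (Fin d → ℤ)) (X : ℝ)
    (hEn : ((((E ×ˢ E) ×ˢ (Finset.Icc (1:ℤ) (N:ℤ) ×ˢ Finset.Icc (1:ℤ) (N:ℤ))).filter
        (fun z => ∀ j, z.1.1 j + (P j).eval z.2.1 = z.1.2 j + (P j).eval z.2.2)).card : ℝ) ≤ X) :
    ((((F ×ˢ Finset.Icc (1:ℤ) (N:ℤ)).filter
        (fun z => (fun j => z.1 j - (P j).eval z.2) ∈ E)).card : ℝ)) ^ 2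
      ≤ (F.card : ℝ) * X := by
  classical
  set I := Finset.Icc (1:ℤ) (N:ℤ) with hI
  set c : (Fin d → ℤ) → ℤ → Prop := fun x n => (fun j => x j - (P j).eval n) ∈ E with hc
  have hs : ((F ×ˢ I).filter (fun z => c z.1 z.2)).card = ∑ x ∈ F, (I.filter (c x)).card :=
    card_filter_product F I c
  -- Cauchy–Schwarz
  have hCS : ((∑ x ∈ F, ((I.filter (c x)).card : ℝ))) ^ 2
      ≤ (F.card : ℝ) * ∑ x ∈ F, ((I.filter (c x)).card : ℝ) ^ 2 := by
    have := Finset.sum_mul_sq_le_sq_mul_sq F (fun _ => (1:ℝ))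
      (fun x => ((I.filter (c x)).card : ℝ))
    simpa using this
  -- sum of squares ≤ energy
  have hsq : ∑ x ∈ F, ((I.filter (c x)).card : ℝ) ^ 2
      ≤ ((((E ×ˢ E) ×ˢ (I ×ˢ I)).filter
        (fun z => ∀ j, z.1.1 j + (P j).eval z.2.1 = z.1.2 j + (P j).eval z.2.2)).card : ℝ) := by
    have hTcard : ∑ x ∈ F, (I.filter (c x)).card ^ 2
        = ((F ×ˢ (I ×ˢ I)).filter (fun z => c z.1 z.2.1 ∧ c z.1 z.2.2)).card := by
      rw [card_filter_product F (I ×ˢ I) (fun x w => c x w.1 ∧ c x w.2)]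
      refine Finset.sum_congr rfl fun x _ => ?_
      rw [Finset.filter_product (c x) (c x), Finset.card_product]
      ring
    have hinj : ((F ×ˢ (I ×ˢ I)).filter (fun z => c z.1 z.2.1 ∧ c z.1 z.2.2)).card
        ≤ (((E ×ˢ E) ×ˢ (I ×ˢ I)).filter
          (fun z => ∀ j, z.1.1 j + (P j).eval z.2.1 = z.1.2 j + (P j).eval z.2.2)).card := by
      apply Finset.card_le_card_of_injOn (fun z =>
        ((fun j => z.1 j - (P j).eval z.2.1, fun j => z.1 j - (P j).eval z.2.2), z.2))
      · rintro ⟨x, ⟨n, n'⟩⟩ hmem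
        rw [Finset.mem_coe, Finset.mem_filter, Finset.mem_product] at hmem
        obtain ⟨⟨hx, hw⟩, h1, h2⟩ := hmem
        rw [Finset.mem_coe, Finset.mem_filter, Finset.mem_product, Finset.mem_product]
        refine ⟨⟨⟨h1, h2⟩, hw⟩, fun j => by show (x j - _) + _ = (x j - _) + _; ring⟩
      · rintro ⟨x1, ⟨n1, n1'⟩⟩ h1 ⟨x2, ⟨n2, n2'⟩⟩ h2 heq
        simp only [Prod.mk.injEq] at heq ⊢
        obtain ⟨⟨he, _⟩, hn1, hn2⟩ := heq
        refine ⟨?_, hn1, hn2⟩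
        funext j
        have := congrFun he j
        rw [hn1] at this
        omega
    calc ∑ x ∈ F, ((I.filter (c x)).card : ℝ) ^ 2
        = ((∑ x ∈ F, (I.filter (c x)).card ^ 2 : ℕ) : ℝ) := by push_cast; rfl
      _ ≤ _ := by rw [hTcard]; exact_mod_cast hinj
  calc ((((F ×ˢ I).filter (fun z => c z.1 z.2)).card : ℝ)) ^ 2
      = ((∑ x ∈ F, ((I.filter (c x)).card : ℝ))) ^ 2 := by rw [hs]; push_cast; rfl
    _ ≤ (F.card : ℝ) * ∑ x ∈ F, ((I.filter (c x)).card : ℝ) ^ 2 := hCS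
    _ ≤ (F.card : ℝ) * X := by
        apply mul_le_mul_of_nonneg_left (le_trans hsq hEn) (Nat.cast_nonneg _)

section trivial_bounds
variable (d N : ℕ) (P : Fin d → Polynomial ℤ) (E F : Finset (Fin d → ℤ))

lemma triv_F :
    ((F ×ˢ Finset.Icc (1:ℤ) (N:ℤ)).filter
      (fun z => (fun j => z.1 j - (P j).eval z.2) ∈ E)).card ≤ F.card * N := by
  apply le_trans (Finset.card_filter_le _ _)
  rw [Finset.card_product, Icc_card]

lemma triv_E :
    ((F ×ˢ Finset.Icc (1:ℤ) (N:ℤ)).filter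
      (fun z => (fun j => z.1 j - (P j).eval z.2) ∈ E)).card ≤ E.card * N := by
  classical
  have : ((F ×ˢ Finset.Icc (1:ℤ) (N:ℤ)).filter
      (fun z => (fun j => z.1 j - (P j).eval z.2) ∈ E)).card
      ≤ (E ×ˢ Finset.Icc (1:ℤ) (N:ℤ)).card := by
    apply Finset.card_le_card_of_injOn (fun z => ((fun j => z.1 j - (P j).eval z.2), z.2))
    · rintro ⟨x, n⟩ hmem
      rw [Finset.mem_coe, Finset.mem_filter, Finset.mem_product] at hmem
      exact Finset.mem_product.mpr ⟨hmem.2, hmem.1.2⟩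
    · rintro ⟨x1, n1⟩ _ ⟨x2, n2⟩ _ heq
      simp only [Prod.mk.injEq] at heq ⊢
      obtain ⟨he, hn⟩ := heq
      refine ⟨funext fun j => ?_, hn⟩
      have := congrFun he j
      rw [hn] at this
      omega
  rwa [Finset.card_product, Icc_card] at this

lemma triv_EF (jt : Fin d) (K : ℕ) (hK : 2 ≤ K) (hdeg : (P jt).natDegree = K) :
    ((F ×ˢ Finset.Icc (1:ℤ) (N:ℤ)).filter
      (fun z => (fun j => z.1 j - (P j).eval z.2) ∈ E)).card ≤ K * (E.card * F.card) := by
  classical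
  set I := Finset.Icc (1:ℤ) (N:ℤ) with hI
  have hsub : ((F ×ˢ I).filter (fun z => (fun j => z.1 j - (P j).eval z.2) ∈ E))
      ⊆ (E ×ˢ F).biUnion (fun ex =>
        ((I.filter (fun n => (P jt).eval n = ex.2 jt - ex.1 jt)).image (fun n => (ex.2, n)))) := by
    rintro ⟨x, n⟩ hmem
    rw [Finset.mem_filter, Finset.mem_product] at hmem
    obtain ⟨⟨hx, hn⟩, he⟩ := hmem
    apply Finset.mem_biUnion.mpr
    refine ⟨((fun j => x j - (P j).eval n), x), Finset.mem_product.mpr ⟨he, hx⟩, ?_⟩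
    apply Finset.mem_image.mpr
    refine ⟨n, Finset.mem_filter.mpr ⟨hn, by simp⟩, rfl⟩
  apply le_trans (Finset.card_le_card hsub)
  apply le_trans Finset.card_biUnion_le
  apply le_trans (Finset.sum_le_sum (g := fun _ => K) ?_)
  · rw [Finset.sum_const, smul_eq_mul, Finset.card_product]
    ring_nf
    omega
  · intro ex _
    apply le_trans Finset.card_image_le
    have hq : (P jt) - C (ex.2 jt - ex.1 jt) ≠ 0 := by
      intro h
      have h2 : P jt = C (ex.2 jt - ex.1 jt) := by linear_combination h
      rw [h2, Polynomial.natDegree_C] at hdeg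
      omega
    have := root_count _ hq (I.filter (fun n => (P jt).eval n = ex.2 jt - ex.1 jt))
      (fun n hn => by
        simp only [Polynomial.eval_sub, Polynomial.eval_C]
        have := (Finset.mem_filter.mp hn).2
        omega)
    apply le_trans this
    apply le_trans (Polynomial.natDegree_sub_le _ _)
    simp only [Polynomial.natDegree_C, Nat.max_le]
    exact ⟨le_of_eq hdeg, Nat.zero_le _⟩

/-- Flip symmetry: counting with `E` and `F` swapped and `P` negated. -/
lemma flip_count :
    ((F ×ˢ Finset.Icc (1:ℤ) (N:ℤ)).filter
      (fun z => (fun j => z.1 j - (P j).eval z.2) ∈ E)).card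
    = ((E ×ˢ Finset.Icc (1:ℤ) (N:ℤ)).filter
      (fun z => (fun j => z.1 j - (-(P j)).eval z.2) ∈ F)).card := by
  classical
  apply Finset.card_bij (fun z _ => ((fun j => z.1 j - (P j).eval z.2), z.2))
  · rintro ⟨x, n⟩ hmem
    rw [Finset.mem_filter, Finset.mem_product] at hmem
    obtain ⟨⟨hx, hn⟩, he⟩ := hmem
    rw [Finset.mem_filter, Finset.mem_product]
    refine ⟨⟨he, hn⟩, ?_⟩
    have : (fun j => (x j - (P j).eval n) - (-(P j)).eval n) = x := by
      funext j; simp [Polynomial.eval_neg]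
    rw [this]
    exact hx
  · rintro ⟨x1, n1⟩ h1 ⟨x2, n2⟩ h2 heq
    simp only [Prod.mk.injEq] at heq ⊢
    obtain ⟨he, hn⟩ := heq
    refine ⟨funext fun j => ?_, hn⟩
    have := congrFun he j
    rw [hn] at this
    omega
  · rintro ⟨y, n⟩ hmem
    rw [Finset.mem_filter, Finset.mem_product] at hmem
    obtain ⟨⟨hy, hn⟩, hf⟩ := hmem
    refine ⟨((fun j => y j - (-(P j)).eval n), n), ?_, ?_⟩
    · rw [Finset.mem_filter, Finset.mem_product]
      refine ⟨⟨hf, hn⟩, ?_⟩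
      have : (fun j => (y j - (-(P j)).eval n) - (P j).eval n) = y := by
        funext j; simp [Polynomial.eval_neg]
      rw [this]
      exact hy
    · simp only [Prod.mk.injEq]
      refine ⟨funext fun j => by simp [Polynomial.eval_neg], by simp⟩

end trivial_bounds

/-- Polynomial evaluation bound on `[1, N]`. -/
lemma eval_bound (p : Polynomial ℤ) (K : ℕ) (hdeg : p.natDegree ≤ K) :
    ∃ c : ℝ, 1 ≤ c ∧ ∀ N : ℕ, 1 ≤ N → ∀ n : ℤ, n ∈ Finset.Icc (1:ℤ) (N:ℤ) →
      ((|p.eval n| : ℤ) : ℝ) ≤ c * (N:ℝ) ^ (K:ℕ) := by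
  refine ⟨∑ i ∈ Finset.range (p.natDegree + 1), (|p.coeff i| : ℝ) + 1, ?_, ?_⟩
  · have : (0:ℝ) ≤ ∑ i ∈ Finset.range (p.natDegree + 1), (|p.coeff i| : ℝ) := by positivity
    linarith
  · intro N hN n hn
    rw [Finset.mem_Icc] at hn
    have hn1 : (1:ℤ) ≤ n := hn.1
    have hnN : n ≤ (N:ℤ) := hn.2
    have heval : |p.eval n| ≤ ∑ i ∈ Finset.range (p.natDegree + 1), |p.coeff i| * (N:ℤ)^K := by
      rw [Polynomial.eval_eq_sum_range]
      apply le_trans (Finset.abs_sum_le_sum_abs _ _)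
      apply Finset.sum_le_sum
      intro i hi
      rw [abs_mul]
      apply mul_le_mul_of_nonneg_left _ (abs_nonneg _)
      rw [abs_pow]
      calc |n| ^ i ≤ (N:ℤ) ^ i := by
            apply pow_le_pow_left₀ (abs_nonneg n)
            rw [abs_of_nonneg (by linarith)]
            exact hnN
        _ ≤ (N:ℤ) ^ K := by
            apply pow_le_pow_right₀ (by exact_mod_cast hN)
            exact le_trans (Nat.lt_succ_iff.mp (Finset.mem_range.mp hi)) hdeg
    calc ((|p.eval n| : ℤ) : ℝ) ≤ ((∑ i ∈ Finset.range (p.natDegree + 1), |p.coeff i| * (N:ℤ)^K : ℤ) : ℝ) := by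
          exact_mod_cast heval
      _ = (∑ i ∈ Finset.range (p.natDegree + 1), (|p.coeff i| : ℝ)) * (N:ℝ)^(K:ℕ) := by
          push_cast
          rw [← Finset.sum_mul]
      _ ≤ _ := by
          apply mul_le_mul_of_nonneg_right _ (by positivity)
          linarith

lemma root_mono (x y : ℝ) (hx : 0 ≤ x) (hy : 0 ≤ y) (k : ℕ) (hk : k ≠ 0)
    (h : x^k ≤ y^k) : x ≤ y := (pow_le_pow_iff_left₀ hx hy hk).mp h

set_option maxHeartbeats 1000000 in
/-- The final numeric case analysis. -/
lemma numeric (K C2 s q r ν μ : ℝ) (hK : 2 ≤ K) (hC2 : 1 ≤ C2) (hs : 0 ≤ s)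
    (hq : 1 ≤ q) (hr : 1 ≤ r) (hν : 1 ≤ ν) (hμ : 1 ≤ μ)
    (h1 : s ≤ K * (q^6 * r^6))
    (h2 : s^2 ≤ r^6 * (K * ν^6 * q^6 + C2 * μ^2 * (q^6)^2))
    (h3 : s^2 ≤ q^6 * (K * ν^6 * r^6 + C2 * μ^2 * (r^6)^2))
    (h4 : s ≤ ν^6 * q^6) (h5 : s ≤ ν^6 * r^6) :
    s ≤ (K + (K + C2) + 1) * (ν^2 * μ^2) * (q^4 * r^4) := by
  have hq0 : (0:ℝ) < q := by linarith
  have hr0 : (0:ℝ) < r := by linarith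
  have hν0 : (0:ℝ) < ν := by linarith
  have hμ0 : (0:ℝ) < μ := by linarith
  have hμ2 : (1:ℝ) ≤ μ^2 := one_le_pow₀ hμ
  have hμ4 : (1:ℝ) ≤ μ^4 := one_le_pow₀ hμ
  have hμ24 : μ^2 ≤ μ^4 := pow_le_pow_right₀ hμ (by norm_num)
  have hKC1 : (1:ℝ) ≤ K + C2 := by linarith
  rcases le_or_gt (q^6*r^6) (ν^6) with hcase | hcase
  · -- small sets: use trivial bound
    have hqr : q^2*r^2 ≤ ν^2 := by
      apply root_mono _ _ (by positivity) (by positivity) 3 (by norm_num)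
      calc (q^2*r^2)^3 = q^6*r^6 := by ring
        _ ≤ ν^6 := hcase
        _ = (ν^2)^3 := by ring
    calc s ≤ K * (q^6 * r^6) := h1
      _ = (q^2*r^2) * (K * (q^4*r^4)) := by ring
      _ ≤ ν^2 * (K * (q^4*r^4)) := by
          apply mul_le_mul_of_nonneg_right hqr (by positivity)
      _ = K * (ν^2 * (q^4*r^4)) := by ring
      _ ≤ ((K + (K + C2) + 1) * μ^2) * (ν^2 * (q^4*r^4)) := by
          apply mul_le_mul_of_nonneg_right _ (by positivity)
          nlinarith
      _ = (K + (K + C2) + 1) * (ν^2 * μ^2) * (q^4 * r^4) := by ring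
  · have hν2 : ν^2 ≤ q^2*r^2 := by
      apply root_mono _ _ (by positivity) (by positivity) 3 (by norm_num)
      calc (ν^2)^3 = ν^6 := by ring
        _ ≤ q^6*r^6 := le_of_lt hcase
        _ = (q^2*r^2)^3 := by ring
    have conclude : ∀ Y : ℝ, 0 ≤ Y → s^2 ≤ Y^2 →
        Y ≤ (K + (K + C2) + 1) * (ν^2 * μ^2) * (q^4 * r^4) →
        s ≤ (K + (K + C2) + 1) * (ν^2 * μ^2) * (q^4 * r^4) := by
      intro Y hY hsY hYle
      exact le_trans (root_mono s Y hs hY 2 (by norm_num) hsY) hYle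
    have f1 : ν^6*q^6*r^6 ≤ ν^4*μ^4*(q^8*r^8) := by
      calc ν^6*q^6*r^6 = ν^2 * (ν^4*(q^6*r^6)) := by ring
        _ ≤ (q^2*r^2) * (ν^4*(q^6*r^6)) := by
            apply mul_le_mul_of_nonneg_right hν2 (by positivity)
        _ = 1 * (ν^4*(q^8*r^8)) := by ring
        _ ≤ μ^4 * (ν^4*(q^8*r^8)) := by
            apply mul_le_mul_of_nonneg_right hμ4 (by positivity)
        _ = ν^4*μ^4*(q^8*r^8) := by ring
    rcases le_or_gt (q^6) (ν^6*r^3) with hcs | hcs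
    · -- E not too large
      have hq4 : q^4 ≤ ν^4*r^2 := by
        apply root_mono _ _ (by positivity) (by positivity) 3 (by norm_num)
        calc (q^4)^3 = (q^6)^2 := by ring
          _ ≤ (ν^6*r^3)^2 := pow_le_pow_left₀ (by positivity) hcs 2
          _ = (ν^4*r^2)^3 := by ring
      apply conclude ((K + C2) * (ν^2 * μ^2) * (q^4 * r^4)) (by positivity)
      · have f2 : q^6*q^6*r^6 ≤ ν^4*(q^8*r^8) := by
          calc q^6*q^6*r^6 = q^4*(q^8*r^6) := by ring
            _ ≤ (ν^4*r^2)*(q^8*r^6) := by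
                apply mul_le_mul_of_nonneg_right hq4 (by positivity)
            _ = ν^4*(q^8*r^8) := by ring
        calc s^2 ≤ r^6 * (K * ν^6 * q^6 + C2 * μ^2 * (q^6)^2) := h2
          _ = K * (ν^6*q^6*r^6) + C2 * μ^2 * (q^6*q^6*r^6) := by ring
          _ ≤ K * (ν^4*μ^4*(q^8*r^8)) + C2 * μ^2 * (ν^4*(q^8*r^8)) := by
              apply add_le_add
              · exact mul_le_mul_of_nonneg_left f1 (by linarith)
              · exact mul_le_mul_of_nonneg_left f2 (by positivity)
          _ ≤ K * (ν^4*μ^4*(q^8*r^8)) + C2 * μ^4 * (ν^4*(q^8*r^8)) := by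
              apply add_le_add_right
              apply mul_le_mul_of_nonneg_right _ (by positivity)
              exact mul_le_mul_of_nonneg_left hμ24 (by linarith)
          _ = (K + C2) * (ν^4*μ^4*(q^8*r^8)) := by ring
          _ ≤ ((K+C2)*(K+C2)) * (ν^4*μ^4*(q^8*r^8)) := by
              apply mul_le_mul_of_nonneg_right _ (by positivity)
              nlinarith
          _ = ((K + C2) * (ν^2 * μ^2) * (q^4 * r^4))^2 := by ring
      · apply mul_le_mul_of_nonneg_right _ (by positivity)
        apply mul_le_mul_of_nonneg_right _ (by positivity)
        linarith
    rcases le_or_gt (r^6) (ν^6*q^3) with hcs2 | hcs2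
    · -- symmetric
      have hr4 : r^4 ≤ ν^4*q^2 := by
        apply root_mono _ _ (by positivity) (by positivity) 3 (by norm_num)
        calc (r^4)^3 = (r^6)^2 := by ring
          _ ≤ (ν^6*q^3)^2 := pow_le_pow_left₀ (by positivity) hcs2 2
          _ = (ν^4*q^2)^3 := by ring
      apply conclude ((K + C2) * (ν^2 * μ^2) * (q^4 * r^4)) (by positivity)
      · have f1' : ν^6*r^6*q^6 ≤ ν^4*μ^4*(q^8*r^8) := by
          calc ν^6*r^6*q^6 = ν^6*q^6*r^6 := by ring
            _ ≤ ν^4*μ^4*(q^8*r^8) := f1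
        have f2' : r^6*r^6*q^6 ≤ ν^4*(q^8*r^8) := by
          calc r^6*r^6*q^6 = r^4*(r^8*q^6) := by ring
            _ ≤ (ν^4*q^2)*(r^8*q^6) := by
                apply mul_le_mul_of_nonneg_right hr4 (by positivity)
            _ = ν^4*(q^8*r^8) := by ring
        calc s^2 ≤ q^6 * (K * ν^6 * r^6 + C2 * μ^2 * (r^6)^2) := h3
          _ = K * (ν^6*r^6*q^6) + C2 * μ^2 * (r^6*r^6*q^6) := by ring
          _ ≤ K * (ν^4*μ^4*(q^8*r^8)) + C2 * μ^2 * (ν^4*(q^8*r^8)) := by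
              apply add_le_add
              · exact mul_le_mul_of_nonneg_left f1' (by linarith)
              · exact mul_le_mul_of_nonneg_left f2' (by positivity)
          _ ≤ K * (ν^4*μ^4*(q^8*r^8)) + C2 * μ^4 * (ν^4*(q^8*r^8)) := by
              apply add_le_add_right
              apply mul_le_mul_of_nonneg_right _ (by positivity)
              exact mul_le_mul_of_nonneg_left hμ24 (by linarith)
          _ = (K + C2) * (ν^4*μ^4*(q^8*r^8)) := by ring
          _ ≤ ((K+C2)*(K+C2)) * (ν^4*μ^4*(q^8*r^8)) := by
              apply mul_le_mul_of_nonneg_right _ (by positivity)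
              nlinarith
          _ = ((K + C2) * (ν^2 * μ^2) * (q^4 * r^4))^2 := by ring
      · apply mul_le_mul_of_nonneg_right _ (by positivity)
        apply mul_le_mul_of_nonneg_right _ (by positivity)
        linarith
    · -- both huge
      have hq12 : ν^18 * q^3 ≤ q^12 := by
        calc ν^18 * q^3 = ν^12 * (ν^6*q^3) := by ring
          _ ≤ ν^12 * r^6 := mul_le_mul_of_nonneg_left (le_of_lt hcs2) (by positivity)
          _ = (ν^6*r^3)^2 := by ring
          _ ≤ (q^6)^2 := pow_le_pow_left₀ (by positivity) (le_of_lt hcs) 2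
          _ = q^12 := by ring
      have hqν : ν^2 ≤ q := by
        apply root_mono _ _ (by positivity) (le_of_lt hq0) 9 (by norm_num)
        have hq3 : (0:ℝ) < q^3 := by positivity
        apply le_of_mul_le_mul_right _ hq3
        calc (ν^2)^9 * q^3 = ν^18 * q^3 := by ring
          _ ≤ q^12 := hq12
          _ = q^9 * q^3 := by ring
      have hr12 : ν^18 * r^3 ≤ r^12 := by
        calc ν^18 * r^3 = ν^12 * (ν^6*r^3) := by ring
          _ ≤ ν^12 * q^6 := mul_le_mul_of_nonneg_left (le_of_lt hcs) (by positivity)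
          _ = (ν^6*q^3)^2 := by ring
          _ ≤ (r^6)^2 := pow_le_pow_left₀ (by positivity) (le_of_lt hcs2) 2
          _ = r^12 := by ring
      have hrν : ν^2 ≤ r := by
        apply root_mono _ _ (by positivity) (le_of_lt hr0) 9 (by norm_num)
        have hr3 : (0:ℝ) < r^3 := by positivity
        apply le_of_mul_le_mul_right _ hr3
        calc (ν^2)^9 * r^3 = ν^18 * r^3 := by ring
          _ ≤ r^12 := hr12
          _ = r^9 * r^3 := by ring
      have hν8 : ν^8 ≤ q^2 * r^2 := by
        calc ν^8 = (ν^2)^2 * (ν^2)^2 := by ring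
          _ ≤ q^2 * r^2 := by
              apply mul_le_mul (pow_le_pow_left₀ (by positivity) hqν 2)
                (pow_le_pow_left₀ (by positivity) hrν 2) (by positivity) (by positivity)
      apply conclude (ν^2 * (q^4 * r^4)) (by positivity)
      · calc s^2 = s * s := sq s
          _ ≤ (ν^6*q^6) * (ν^6*r^6) := mul_le_mul h4 h5 hs (by positivity)
          _ = ν^8 * (ν^4 * (q^6 * r^6)) := by ring
          _ ≤ (q^2*r^2) * (ν^4 * (q^6 * r^6)) := by
              apply mul_le_mul_of_nonneg_right hν8 (by positivity)
          _ = (ν^2 * (q^4 * r^4))^2 := by ring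
      · calc ν^2 * (q^4 * r^4) = 1 * (ν^2 * (q^4 * r^4)) := by ring
          _ ≤ ((K + (K + C2) + 1) * μ^2) * (ν^2 * (q^4 * r^4)) := by
              apply mul_le_mul_of_nonneg_right _ (by positivity)
              nlinarith
          _ = (K + (K + C2) + 1) * (ν^2 * μ^2) * (q^4 * r^4) := by ring
set_option maxHeartbeats 2000000 in
/-- restricted weak-type ℓ^{3/2} → ℓ^3 estimate (with ε-loss) for
discrete averages along a polynomial curve with separated degrees that is not
a single linear polynomial. -/
theorem stmt0 (d : ℕ) (hd : 1 ≤ d) (P : Fin d → Polynomial ℤ)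
    (hnc : ∀ j, 0 < (P j).natDegree)
    (hsep : ∀ i j : Fin d, i < j → (P i).natDegree < (P j).natDegree)
    (hnl : ¬ (d = 1 ∧ ∀ j, (P j).natDegree = 1))
    (ε : ℝ) (hε : 0 < ε) :
    ∃ C : ℝ, 0 < C ∧ ∀ N : ℕ, 1 ≤ N → ∀ E F : Finset (Fin d → ℤ),
      (((F ×ˢ Finset.Icc (1:ℤ) (N:ℤ)).filter
          (fun z => (fun j => z.1 j - (P j).eval z.2) ∈ E)).card : ℝ) ≤
        C * (N:ℝ) ^ ((1:ℝ)/3 + ε) * (E.card:ℝ) ^ ((2:ℝ)/3) * (F.card:ℝ) ^ ((2:ℝ)/3) := by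
  classical
  set jt : Fin d := ⟨d-1, by omega⟩ with hjt
  set K : ℕ := (P jt).natDegree with hKdef
  have hjtle : ∀ j : Fin d, (P j).natDegree ≤ K := by
    intro j
    rcases lt_or_eq_of_le (show j ≤ jt from by
      rw [Fin.le_def]; have := j.isLt; simp [hjt]; omega) with h | h
    · exact le_of_lt (hsep j jt h)
    · rw [h]
  have hK2 : 2 ≤ K := by
    have hKeq : K = (P jt).natDegree := hKdef
    by_cases hd1 : d = 1
    · push_neg at hnl
      obtain ⟨j, hj⟩ := hnl hd1
      have hjjt : j = jt := by
        apply Fin.ext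
        have h1 := j.isLt
        have h3 : (jt:ℕ) = d - 1 := by rw [hjt]
        omega
      rw [hjjt] at hj
      have h1 := hnc jt
      omega
    · have h01 : (⟨0, by omega⟩ : Fin d) < jt := by
        rw [Fin.lt_def]
        have h3 : (jt:ℕ) = d - 1 := by rw [hjt]
        simp only [h3]
        omega
      have h1 := hsep _ jt h01
      have h2 := hnc (⟨0, by omega⟩ : Fin d)
      omega
  have hK0 : (0:ℝ) < (K:ℝ) := by exact_mod_cast (show 0 < K by omega)
  have hK2' : (2:ℝ) ≤ (K:ℝ) := by exact_mod_cast hK2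
  -- uniform coefficient bound
  choose c hc1 hc2 using fun j => eval_bound (P j) K (hjtle j)
  set CP : ℝ := ∑ j, c j with hCPdef
  have hCPj : ∀ j, c j ≤ CP :=
    fun j => Finset.single_le_sum (fun i _ => by linarith [hc1 i]) (Finset.mem_univ j)
  have hCP1 : 1 ≤ CP := le_trans (hc1 jt) (hCPj jt)
  -- divisor bound constant
  set δ : ℝ := ε / K with hδdef
  have hδ : 0 < δ := div_pos hε hK0
  obtain ⟨Cδ, hCδ1, hCδ⟩ := divisor_bound δ hδ
  set C2 : ℝ := 2*K*Cδ*(2*CP)^δ with hC2def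
  have h2CP : (1:ℝ) ≤ (2*CP)^δ := by
    calc (1:ℝ) = (1:ℝ)^δ := (Real.one_rpow δ).symm
      _ ≤ (2*CP)^δ := Real.rpow_le_rpow (by norm_num) (by linarith) hδ.le
  have hC21 : 1 ≤ C2 := by
    calc (1:ℝ) = 1*1*1 := by norm_num
      _ ≤ (2*K)*Cδ*(2*CP)^δ := by
          apply mul_le_mul (mul_le_mul (by linarith) hCδ1 zero_le_one (by linarith))
            h2CP zero_le_one (by positivity)
      _ = C2 := by rw [hC2def]; try ring
  refine ⟨(K:ℝ) + ((K:ℝ) + C2) + 1, by linarith, ?_⟩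
  intro N hN E F
  rcases Finset.eq_empty_or_nonempty E with hE | hEne
  · simp only [hE, Finset.notMem_empty, Finset.filter_false, Finset.card_empty,
      Nat.cast_zero]
    rw [Real.zero_rpow (by norm_num)]
    simp
  rcases Finset.eq_empty_or_nonempty F with hF | hFne
  · simp only [hF, Finset.empty_product, Finset.filter_empty, Finset.card_empty,
      Nat.cast_zero]
    rw [Real.zero_rpow (by norm_num)]
    simp
  set n : ℝ := (N:ℝ) with hndef
  have hn1 : (1:ℝ) ≤ n := by rw [hndef]; exact_mod_cast hN
  have hn0 : (0:ℝ) ≤ n := by linarith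
  -- the pair-count bound, uniform in sign of P
  have hMgen : ∀ P' : Fin d → Polynomial ℤ, (P' jt).natDegree = K →
      (∀ j, ∀ x : ℤ, x ∈ Finset.Icc (1:ℤ) (N:ℤ) →
        ((|(P' j).eval x| : ℤ) : ℝ) ≤ CP * n^(K:ℕ)) →
      ∀ v : Fin d → ℤ, v ≠ 0 →
      (((Finset.Icc (1:ℤ) (N:ℤ) ×ˢ Finset.Icc (1:ℤ) (N:ℤ)).filter
        (fun pr => ∀ j, (P' j).eval pr.1 - (P' j).eval pr.2 = v j)).card : ℝ)
        ≤ C2 * n^ε := by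
    intro P' hdeg' hev v hv
    have hrhs0 : (0:ℝ) ≤ C2 * n^ε := by positivity
    rcases Finset.eq_empty_or_nonempty ((Finset.Icc (1:ℤ) (N:ℤ) ×ˢ Finset.Icc (1:ℤ) (N:ℤ)).filter
        (fun pr => ∀ j, (P' j).eval pr.1 - (P' j).eval pr.2 = v j)) with hemp | ⟨⟨x, y⟩, hmem⟩
    · rw [hemp]; simpa using hrhs0
    obtain ⟨j0, hj0⟩ : ∃ j0, v j0 ≠ 0 := by
      by_contra h
      push_neg at h
      exact hv (funext fun j => h j)
    have hpc := pair_count d P' jt K hK2 hdeg' N v j0 hj0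
    rw [Finset.mem_filter, Finset.mem_product] at hmem
    obtain ⟨⟨hx, hy⟩, hcond⟩ := hmem
    have hvj : v j0 = (P' j0).eval x - (P' j0).eval y := (hcond j0).symm
    have hvb : (((v j0).natAbs : ℕ) : ℝ) ≤ 2*(CP * n^(K:ℕ)) := by
      have e1 := hev j0 x hx
      have e2 := hev j0 y hy
      have hcast : (((v j0).natAbs : ℕ) : ℝ) = ((|v j0| : ℤ) : ℝ) := by
        rw [Nat.cast_natAbs, Int.cast_abs]
      rw [hcast, hvj]
      calc ((|(P' j0).eval x - (P' j0).eval y| : ℤ) : ℝ)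
          ≤ ((|(P' j0).eval x| + |(P' j0).eval y| : ℤ) : ℝ) := by
            exact_mod_cast abs_sub ((P' j0).eval x) ((P' j0).eval y)
        _ = ((|(P' j0).eval x| : ℤ) : ℝ) + ((|(P' j0).eval y| : ℤ) : ℝ) := by push_cast; ring
        _ ≤ CP * n^(K:ℕ) + CP * n^(K:ℕ) := add_le_add e1 e2
        _ = 2*(CP * n^(K:ℕ)) := by ring
    have hτ : (((v j0).natAbs.divisors.card : ℕ) : ℝ)
        ≤ Cδ * (((v j0).natAbs : ℕ) : ℝ)^δ := hCδ _ (Int.natAbs_ne_zero.mpr hj0)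
    have hmono : (((v j0).natAbs : ℕ) : ℝ)^δ ≤ (2*(CP * n^(K:ℕ)))^δ :=
      Real.rpow_le_rpow (Nat.cast_nonneg _) hvb hδ.le
    have hfin : 2*(K:ℝ)*(Cδ * (2*(CP * n^(K:ℕ)))^δ) = C2 * n^ε := by
      have hKε : (K:ℝ) * δ = ε := by
        rw [hδdef]; field_simp
      rw [show (2:ℝ)*(CP * n^(K:ℕ)) = (2*CP) * n^(K:ℕ) by ring,
        Real.mul_rpow (by positivity) (by positivity),
        ← Real.rpow_natCast n K, ← Real.rpow_mul hn0, hKε, hC2def]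
      ring
    calc (((Finset.Icc (1:ℤ) (N:ℤ) ×ˢ Finset.Icc (1:ℤ) (N:ℤ)).filter
        (fun pr => ∀ j, (P' j).eval pr.1 - (P' j).eval pr.2 = v j)).card : ℝ)
        ≤ ((2 * K * (v j0).natAbs.divisors.card : ℕ) : ℝ) := by exact_mod_cast hpc
      _ = 2*(K:ℝ)*(((v j0).natAbs.divisors.card : ℕ) : ℝ) := by push_cast; ring
      _ ≤ 2*(K:ℝ)*(Cδ * (((v j0).natAbs : ℕ) : ℝ)^δ) := by
          apply mul_le_mul_of_nonneg_left hτ (by positivity)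
      _ ≤ 2*(K:ℝ)*(Cδ * (2*(CP * n^(K:ℕ)))^δ) := by
          apply mul_le_mul_of_nonneg_left _ (by positivity)
          exact mul_le_mul_of_nonneg_left hmono (by linarith)
      _ = C2 * n^ε := hfin
  -- evaluation bounds for P and -P
  have hevP : ∀ j, ∀ x : ℤ, x ∈ Finset.Icc (1:ℤ) (N:ℤ) →
      ((|(P j).eval x| : ℤ) : ℝ) ≤ CP * n^(K:ℕ) := by
    intro j x hx
    calc ((|(P j).eval x| : ℤ) : ℝ) ≤ c j * n^(K:ℕ) := hc2 j N hN x hx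
      _ ≤ CP * n^(K:ℕ) := mul_le_mul_of_nonneg_right (hCPj j) (by positivity)
  have hevPn : ∀ j, ∀ x : ℤ, x ∈ Finset.Icc (1:ℤ) (N:ℤ) →
      ((|(-(P j)).eval x| : ℤ) : ℝ) ≤ CP * n^(K:ℕ) := by
    intro j x hx
    rw [Polynomial.eval_neg, abs_neg]
    exact hevP j x hx
  have hdegn : ((fun j => -(P j)) jt).natDegree = K := by
    simp only [Polynomial.natDegree_neg]; try exact hKdef.symm
  -- the two Cauchy–Schwarz bounds
  have hMP := hMgen P hKdef.symm hevP
  have hMN := hMgen (fun j => -(P j)) hdegn hevPn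
  have hEnE := energy_bound d K N P jt hK2 hKdef.symm (C2 * n^ε) (by positivity) hMP E
  have hCS1 := master_CS d K N P E F _ hEnE
  have hEnF := energy_bound d K N (fun j => -(P j)) jt hK2 hdegn (C2 * n^ε)
    (by positivity) hMN F
  have hCS2' := master_CS d K N (fun j => -(P j)) F E _ hEnF
  rw [← flip_count d N P E F] at hCS2'
  -- trivial bounds
  have ht1 := triv_EF d N P E F jt K hK2 hKdef.symm
  have ht4 := triv_E d N P E F
  have ht5 := triv_F d N P E F
  -- set up real variables
  set s : ℝ := (((F ×ˢ Finset.Icc (1:ℤ) (N:ℤ)).filter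
      (fun z => (fun j => z.1 j - (P j).eval z.2) ∈ E)).card : ℝ) with hsdef
  set a : ℝ := (E.card : ℝ) with hadef
  set b : ℝ := (F.card : ℝ) with hbdef
  have hs0 : 0 ≤ s := Nat.cast_nonneg _
  have ha1 : (1:ℝ) ≤ a := by
    rw [hadef]; exact_mod_cast Finset.card_pos.mpr hEne
  have hb1 : (1:ℝ) ≤ b := by
    rw [hbdef]; exact_mod_cast Finset.card_pos.mpr hFne
  have ha0 : (0:ℝ) ≤ a := by linarith
  have hb0 : (0:ℝ) ≤ b := by linarith
  -- sixth roots
  set q : ℝ := a ^ ((6:ℝ)⁻¹) with hqd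
  set r : ℝ := b ^ ((6:ℝ)⁻¹) with hrd
  set ν : ℝ := n ^ ((6:ℝ)⁻¹) with hνd
  set μ : ℝ := n ^ (ε/2) with hμd
  have hq6 : q^(6:ℕ) = a := by
    rw [hqd, ← Real.rpow_natCast (a ^ ((6:ℝ)⁻¹)) 6, ← Real.rpow_mul ha0]; norm_num
  have hr6 : r^(6:ℕ) = b := by
    rw [hrd, ← Real.rpow_natCast (b ^ ((6:ℝ)⁻¹)) 6, ← Real.rpow_mul hb0]; norm_num
  have hν6 : ν^(6:ℕ) = n := by
    rw [hνd, ← Real.rpow_natCast (n ^ ((6:ℝ)⁻¹)) 6, ← Real.rpow_mul hn0]; norm_num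
  have hμ2 : μ^(2:ℕ) = n^ε := by
    rw [hμd, ← Real.rpow_natCast (n ^ (ε/2)) 2, ← Real.rpow_mul hn0]; norm_num
  have hq4 : q^(4:ℕ) = a ^ ((2:ℝ)/3) := by
    rw [hqd, ← Real.rpow_natCast (a ^ ((6:ℝ)⁻¹)) 4, ← Real.rpow_mul ha0]; norm_num
  have hr4 : r^(4:ℕ) = b ^ ((2:ℝ)/3) := by
    rw [hrd, ← Real.rpow_natCast (b ^ ((6:ℝ)⁻¹)) 4, ← Real.rpow_mul hb0]; norm_num
  have hν2μ2 : ν^(2:ℕ) * μ^(2:ℕ) = n ^ ((1:ℝ)/3 + ε) := by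
    rw [hνd, hμd, ← Real.rpow_natCast (n ^ ((6:ℝ)⁻¹)) 2, ← Real.rpow_mul hn0,
      ← Real.rpow_natCast (n ^ (ε/2)) 2, ← Real.rpow_mul hn0,
      ← Real.rpow_add (by linarith : (0:ℝ) < n)]
    norm_num
  have hq1 : (1:ℝ) ≤ q := by
    rw [hqd]
    calc (1:ℝ) = (1:ℝ) ^ ((6:ℝ)⁻¹) := (Real.one_rpow _).symm
      _ ≤ a ^ ((6:ℝ)⁻¹) := Real.rpow_le_rpow zero_le_one ha1 (by norm_num)
  have hr1 : (1:ℝ) ≤ r := by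
    rw [hrd]
    calc (1:ℝ) = (1:ℝ) ^ ((6:ℝ)⁻¹) := (Real.one_rpow _).symm
      _ ≤ b ^ ((6:ℝ)⁻¹) := Real.rpow_le_rpow zero_le_one hb1 (by norm_num)
  have hν1 : (1:ℝ) ≤ ν := by
    rw [hνd]
    calc (1:ℝ) = (1:ℝ) ^ ((6:ℝ)⁻¹) := (Real.one_rpow _).symm
      _ ≤ n ^ ((6:ℝ)⁻¹) := Real.rpow_le_rpow zero_le_one hn1 (by norm_num)
  have hμ1 : (1:ℝ) ≤ μ := by
    rw [hμd]
    calc (1:ℝ) = (1:ℝ) ^ (ε/2) := (Real.one_rpow _).symm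
      _ ≤ n ^ (ε/2) := Real.rpow_le_rpow zero_le_one hn1 (by positivity)
  -- translate the counting bounds
  have h1 : s ≤ (K:ℝ) * (q^(6:ℕ) * r^(6:ℕ)) := by
    rw [hq6, hr6]
    calc s ≤ ((K * (E.card * F.card) : ℕ) : ℝ) := by rw [hsdef]; exact_mod_cast ht1
      _ = (K:ℝ) * (a * b) := by push_cast; rw [hadef, hbdef]
  have h4 : s ≤ ν^(6:ℕ) * q^(6:ℕ) := by
    rw [hν6, hq6]
    calc s ≤ ((E.card * N : ℕ) : ℝ) := by rw [hsdef]; exact_mod_cast ht4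
      _ = n * a := by push_cast; rw [hadef, hndef]; ring
  have h5 : s ≤ ν^(6:ℕ) * r^(6:ℕ) := by
    rw [hν6, hr6]
    calc s ≤ ((F.card * N : ℕ) : ℝ) := by rw [hsdef]; exact_mod_cast ht5
      _ = n * b := by push_cast; rw [hbdef, hndef]; ring
  have h2 : s^2 ≤ r^(6:ℕ) * ((K:ℝ) * ν^(6:ℕ) * q^(6:ℕ) + C2 * μ^(2:ℕ) * (q^(6:ℕ))^2) := by
    rw [hν6, hq6, hr6, hμ2]
    calc s^2 ≤ b * ((K:ℝ) * N * a + (C2 * n^ε) * a^2) := hCS1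
      _ = b * ((K:ℝ) * n * a + C2 * n^ε * a^2) := by rw [hndef]
  have h3 : s^2 ≤ q^(6:ℕ) * ((K:ℝ) * ν^(6:ℕ) * r^(6:ℕ) + C2 * μ^(2:ℕ) * (r^(6:ℕ))^2) := by
    rw [hν6, hq6, hr6, hμ2]
    calc s^2 ≤ a * ((K:ℝ) * N * b + (C2 * n^ε) * b^2) := hCS2'
      _ = a * ((K:ℝ) * n * b + C2 * n^ε * b^2) := by rw [hndef]
  have := numeric (K:ℝ) C2 s q r ν μ hK2' hC21 hs0 hq1 hr1 hν1 hμ1 h1 h2 h3 h4 h5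
  calc s ≤ ((K:ℝ) + ((K:ℝ) + C2) + 1) * (ν^(2:ℕ) * μ^(2:ℕ)) * (q^(4:ℕ) * r^(4:ℕ)) := this
    _ = ((K:ℝ) + ((K:ℝ) + C2) + 1) * (n ^ ((1:ℝ)/3 + ε)) * (a ^ ((2:ℝ)/3)) * (b ^ ((2:ℝ)/3)) := by
        rw [hν2μ2, hq4, hr4]; ring
end

section
/- (Refinement lemma.) Let γ : ℤ → ℤ^d be a polynomial curve, N ≥ 1 an integer, and E, F ⊆ ℤ^d finite nonempty sets with T := #{(x,n) ∈ F × {1,…,N} : x − γ(n) ∈ E} > 0; set α := T/|F| and β := T/|E|. Then for every integer k ≥ 1 there exist constants c_1, …, c_k ∈ (0,1] depending only on j (not on γ, N, E, F) and sequences of subsets E = E_0 ⊇ E_1 ⊇ ⋯ ⊇ E_k and F = F_0 ⊇ F_1 ⊇ ⋯ ⊇ F_k such that for every 1 ≤ j ≤ k: (a) every x ∈ F_j satisfies #{n ∈ {1,…,N} : x − γ(n) ∈ E_{j−1}} ≥ c_j α; (b) #{(x,n) ∈ F_j × {1,…,N} : x − γ(n) ∈ E_{j−1}} ≥ c_j T;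 (c) every y ∈ E_j satisfies #{n ∈ {1,…,N} : y + γ(n) ∈ F_j} ≥ c_j β; (d) #{(y,n) ∈ E_j × {1,…,N} : y + γ(n) ∈ F_j} ≥ c_j T. -/
open Finset

/-- The un-normalized pairing ⟨𝒜̃_N 1_E, 1_F⟩ = #{(x,n) ∈ F × [1,N] : x − γ(n) ∈ E}
for the polynomial curve γ(n) = ((P j).eval n)_j. -/
noncomputable def pairCount (d : ℕ) (P : Fin d → Polynomial ℤ) (N : ℕ)
    (E F : Finset (Fin d → ℤ)) : ℕ :=
  ((F ×ˢ Finset.Icc (1:ℤ) (N:ℤ)).filter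
    (fun z => (fun j => z.1 j - (P j).eval z.2) ∈ E)).card

/-- The adjoint un-normalized pairing ⟨𝒜̃*_N 1_F, 1_E⟩ = #{(y,n) ∈ E × [1,N] : y + γ(n) ∈ F}. -/
noncomputable def adjPairCount (d : ℕ) (P : Fin d → Polynomial ℤ) (N : ℕ)
    (E F : Finset (Fin d → ℤ)) : ℕ :=
  ((E ×ˢ Finset.Icc (1:ℤ) (N:ℤ)).filter
    (fun z => (fun j => z.1 j + (P j).eval z.2) ∈ F)).card

/- ===== auxiliary machinery ===== -/

/-- forward degree of `x` into `A` -/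
noncomputable def degF (d : ℕ) (P : Fin d → Polynomial ℤ) (N : ℕ)
    (A : Finset (Fin d → ℤ)) (x : Fin d → ℤ) : ℕ :=
  ((Finset.Icc (1:ℤ) (N:ℤ)).filter (fun n => (fun i => x i - (P i).eval n) ∈ A)).card

/-- adjoint degree of `y` into `B` -/
noncomputable def degE (d : ℕ) (P : Fin d → Polynomial ℤ) (N : ℕ)
    (B : Finset (Fin d → ℤ)) (y : Fin d → ℤ) : ℕ :=
  ((Finset.Icc (1:ℤ) (N:ℤ)).filter (fun n => (fun i => y i + (P i).eval n) ∈ B)).card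

lemma pairCount_eq_sum (d : ℕ) (P : Fin d → Polynomial ℤ) (N : ℕ)
    (A B : Finset (Fin d → ℤ)) :
    pairCount d P N A B = ∑ x ∈ B, degF d P N A x := by
  unfold pairCount degF
  rw [Finset.card_filter, Finset.sum_product]
  congr 1
  ext x
  rw [Finset.card_filter]

lemma adjPairCount_eq_sum (d : ℕ) (P : Fin d → Polynomial ℤ) (N : ℕ)
    (A B : Finset (Fin d → ℤ)) :
    adjPairCount d P N A B = ∑ y ∈ A, degE d P N B y := by
  unfold adjPairCount degE
  rw [Finset.card_filter, Finset.sum_product]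
  congr 1
  ext y
  rw [Finset.card_filter]

lemma pairCount_eq_adj (d : ℕ) (P : Fin d → Polynomial ℤ) (N : ℕ)
    (E F : Finset (Fin d → ℤ)) :
    pairCount d P N E F = adjPairCount d P N E F := by
  unfold pairCount adjPairCount
  apply Finset.card_bij'
    (fun (z : (Fin d → ℤ) × ℤ) _ => ((fun j => z.1 j - (P j).eval z.2), z.2))
    (fun (z : (Fin d → ℤ) × ℤ) _ => ((fun j => z.1 j + (P j).eval z.2), z.2))
  · intro z hz
    simp only [Finset.mem_filter, Finset.mem_product] at hz ⊢
    refine ⟨⟨hz.2, hz.1.2⟩, ?_⟩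
    have : (fun j => (z.1 j - (P j).eval z.2) + (P j).eval z.2) = z.1 := by
      funext j; ring
    rw [this]; exact hz.1.1
  · intro z hz
    simp only [Finset.mem_filter, Finset.mem_product] at hz ⊢
    refine ⟨⟨hz.2, hz.1.2⟩, ?_⟩
    have : (fun j => (z.1 j + (P j).eval z.2) - (P j).eval z.2) = z.1 := by
      funext j; ring
    rw [this]; exact hz.1.1
  · intro z hz
    ext j
    · simp
    · simp
  · intro z hz
    ext j
    · simp
    · simp

/-- refining by a threshold loses at most `card * threshold` of the mass -/
lemma sum_filter_ge {ι : Type*} (s : Finset ι) (w : ι → ℕ) (t : ℝ) (ht : 0 ≤ t)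
    [DecidablePred fun x => t ≤ (w x : ℝ)] :
    (∑ x ∈ s, (w x : ℝ)) - (s.card : ℝ) * t ≤
      ∑ x ∈ s.filter (fun x => t ≤ (w x : ℝ)), (w x : ℝ) := by
  have hsplit := Finset.sum_filter_add_sum_filter_not s (fun x => t ≤ (w x : ℝ))
    (fun x => (w x : ℝ))
  have hsmall : ∑ x ∈ s.filter (fun x => ¬ t ≤ (w x : ℝ)), (w x : ℝ) ≤
      ((s.filter (fun x => ¬ t ≤ (w x : ℝ))).card : ℝ) * t := by
    rw [← nsmul_eq_mul]
    apply Finset.sum_le_card_nsmul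
    intro x hx
    have := (Finset.mem_filter.mp hx).2
    exact le_of_lt (lt_of_not_ge this)
  have hcard : ((s.filter (fun x => ¬ t ≤ (w x : ℝ))).card : ℝ) ≤ (s.card : ℝ) := by
    exact_mod_cast Finset.card_filter_le _ _
  nlinarith [mul_le_mul_of_nonneg_right hcard ht]


lemma aux_mul_div (a b c : ℝ) (hb : b ≠ 0) (hc : c ≠ 0) : b * (a / (c * b)) = a / c := by
  field_simp

lemma aux_div_le (θ T Fc : ℝ) (hθ : 0 ≤ θ) (hT : 0 ≤ T) (hFc : 0 < Fc) :
    θ * (1/4) * (T / Fc) ≤ θ * T / (2 * Fc) := by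
  have h1 : θ * (1/4) * (T / Fc) = θ * T / (4 * Fc) := by
    field_simp
  have h2 : θ * T / (4 * Fc) ≤ θ * T / (2 * Fc) := by
    gcongr
    linarith
  linarith

lemma aux_div_eq (θ T Ec : ℝ) (hEc : Ec ≠ 0) : θ * (1/4) * (T / Ec) = θ * T / (4 * Ec) := by
  field_simp

lemma aux_quarter (θ T : ℝ) (h : 0 ≤ θ * T) : θ * (1/4) * T ≤ θ * T / 2 := by nlinarith

open scoped Classical in
/-- the iterated refinement sequence: `(E_j, F_j)` pairs -/
noncomputable def refineSeq (d : ℕ) (P : Fin d → Polynomial ℤ) (N : ℕ)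
    (tF tE : ℕ → ℝ) (E F : Finset (Fin d → ℤ)) :
    ℕ → Finset (Fin d → ℤ) × Finset (Fin d → ℤ)
  | 0 => (E, F)
  | m + 1 =>
    let p := refineSeq d P N tF tE E F m
    let F' := p.2.filter (fun x => tF m ≤ (degF d P N p.1 x : ℝ))
    (p.1.filter (fun y => tE m ≤ (degE d P N F' y : ℝ)), F')

/-- Refinement lemma: there are constants c_j ∈ (0,1], depending only
on j (not on γ, N, E, F), and nested refinements E = E₀ ⊇ E₁ ⊇ ⋯ ⊇ E_k,
F = F₀ ⊇ F₁ ⊇ ⋯ ⊇ F_k satisfying the pointwise lower bounds (a), (c) and the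
mass-preservation bounds (b), (d). -/
theorem stmt8 (k : ℕ) (hk : 1 ≤ k) :
    ∃ c : ℕ → ℝ,
      (∀ j, 1 ≤ j → j ≤ k → 0 < c j ∧ c j ≤ 1) ∧
      ∀ (d : ℕ) (P : Fin d → Polynomial ℤ) (N : ℕ), 1 ≤ N →
        ∀ E F : Finset (Fin d → ℤ), E.Nonempty → F.Nonempty →
          0 < pairCount d P N E F →
          ∃ Es Fs : ℕ → Finset (Fin d → ℤ),
            Es 0 = E ∧ Fs 0 = F ∧
            ∀ j, 1 ≤ j → j ≤ k →
              Fs j ⊆ Fs (j - 1) ∧ Es j ⊆ Es (j - 1) ∧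
              -- (a): every x ∈ F_j sees ≳ α points of E_{j−1} along the curve
              (∀ x ∈ Fs j,
                c j * ((pairCount d P N E F : ℝ) / (F.card : ℝ)) ≤
                  (((Finset.Icc (1:ℤ) (N:ℤ)).filter
                    (fun n => (fun i => x i - (P i).eval n) ∈ Es (j - 1))).card : ℝ)) ∧
              -- (b): mass preservation for the forward pairing
              c j * (pairCount d P N E F : ℝ) ≤ (pairCount d P N (Es (j - 1)) (Fs j) : ℝ) ∧
              -- (c): every y ∈ E_j sees ≳ β points of F_j along the curve
              (∀ y ∈ Es j,
                c j * ((pairCount d P N E F : ℝ) / (E.card : ℝ)) ≤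
                  (((Finset.Icc (1:ℤ) (N:ℤ)).filter
                    (fun n => (fun i => y i + (P i).eval n) ∈ Fs j)).card : ℝ)) ∧
              -- (d): mass preservation for the adjoint pairing
              c j * (pairCount d P N E F : ℝ) ≤ (adjPairCount d P N (Es j) (Fs j) : ℝ) := by
  classical
  refine ⟨fun j => (1/4 : ℝ) ^ j, ?_, ?_⟩
  · intro j _ _
    constructor
    · positivity
    · exact pow_le_one₀ (by norm_num) (by norm_num)
  intro d P N hN E F hE hF hT
  set T : ℕ := pairCount d P N E F with hTdef
  have hTpos : (0 : ℝ) < T := by exact_mod_cast hT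
  have hFc : (0 : ℝ) < F.card := by exact_mod_cast Finset.card_pos.mpr hF
  have hEc : (0 : ℝ) < E.card := by exact_mod_cast Finset.card_pos.mpr hE
  have hFc0 : (F.card : ℝ) ≠ 0 := ne_of_gt hFc
  have hEc0 : (E.card : ℝ) ≠ 0 := ne_of_gt hEc
  set tF : ℕ → ℝ := fun m => (1/4 : ℝ) ^ m * T / (2 * F.card) with htFdef
  set tE : ℕ → ℝ := fun m => (1/4 : ℝ) ^ m * T / (4 * E.card) with htEdef
  set g := refineSeq d P N tF tE E F with hgdef
  refine ⟨fun j => (g j).1, fun j => (g j).2, rfl, rfl, ?_⟩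
  have htFpos : ∀ m, 0 ≤ tF m := by
    intro m; rw [htFdef]; positivity
  have htEpos : ∀ m, 0 ≤ tE m := by
    intro m; rw [htEdef]; positivity
  -- the successor step unfolds
  have hsucc : ∀ m, g (m+1) =
      ((g m).1.filter (fun y => tE m ≤
        (degE d P N ((g m).2.filter (fun x => tF m ≤ (degF d P N (g m).1 x : ℝ))) y : ℝ)),
       (g m).2.filter (fun x => tF m ≤ (degF d P N (g m).1 x : ℝ))) := by
    intro m
    rw [hgdef]
    rfl
  -- key invariant (by induction) together with the half-mass step bound
  have key : ∀ m, (g m).1 ⊆ E ∧ (g m).2 ⊆ F ∧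
      ((1/4 : ℝ) ^ m * T ≤ (adjPairCount d P N (g m).1 (g m).2 : ℝ)) ∧
      ((1/4 : ℝ) ^ m * T / 2 ≤ (pairCount d P N (g m).1 (g (m+1)).2 : ℝ)) := by
    have step : ∀ m, (g m).1 ⊆ E → (g m).2 ⊆ F →
        ((1/4 : ℝ) ^ m * T ≤ (adjPairCount d P N (g m).1 (g m).2 : ℝ)) →
        ((1/4 : ℝ) ^ m * T / 2 ≤ (pairCount d P N (g m).1 (g (m+1)).2 : ℝ)) ∧
        ((1/4 : ℝ) ^ (m+1) * T ≤ (adjPairCount d P N (g (m+1)).1 (g (m+1)).2 : ℝ)) := by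
      intro m hAE hBF hmass
      set A := (g m).1
      set B := (g m).2
      set B' := B.filter (fun x => tF m ≤ (degF d P N A x : ℝ)) with hB'
      set A' := A.filter (fun y => tE m ≤ (degE d P N B' y : ℝ)) with hA'
      have hg1 : (g (m+1)).1 = A' := by rw [hsucc m]
      have hg2 : (g (m+1)).2 = B' := by rw [hsucc m]
      have hz : (0:ℝ) ≤ (1/4:ℝ) ^ m * T := by positivity
      -- mass of the forward pairing after refining B
      have hPC : (pairCount d P N A B : ℝ) - (B.card : ℝ) * tF m ≤
          (pairCount d P N A B' : ℝ) := by
        have h1 : (pairCount d P N A B : ℝ) = ∑ x ∈ B, ((degF d P N A x : ℕ) : ℝ) := by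
          rw [pairCount_eq_sum]; push_cast; ring
        have h2 : (pairCount d P N A B' : ℝ) = ∑ x ∈ B', ((degF d P N A x : ℕ) : ℝ) := by
          rw [pairCount_eq_sum]; push_cast; ring
        rw [h1, h2, hB']
        exact sum_filter_ge B (degF d P N A) (tF m) (htFpos m)
      have hBcard : (B.card : ℝ) * tF m ≤ (1/4:ℝ) ^ m * T / 2 := by
        have hle : (B.card : ℝ) ≤ (F.card : ℝ) := by
          exact_mod_cast Finset.card_le_card hBF
        have hval : (F.card : ℝ) * tF m = (1/4:ℝ) ^ m * T / 2 := by
          rw [htFdef]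
          exact aux_mul_div ((1/4:ℝ) ^ m * T) (F.card : ℝ) 2 hFc0 two_ne_zero
        calc (B.card : ℝ) * tF m ≤ (F.card : ℝ) * tF m :=
              mul_le_mul_of_nonneg_right hle (htFpos m)
          _ = _ := hval
      have hmass' : (1/4:ℝ) ^ m * T ≤ (pairCount d P N A B : ℝ) := by
        rw [pairCount_eq_adj]; exact hmass
      have hhalf : (1/4:ℝ) ^ m * T / 2 ≤ (pairCount d P N A B' : ℝ) := by
        linarith
      refine ⟨by rw [hg2]; exact hhalf, ?_⟩
      -- now refine A
      have hadj : (1/4:ℝ) ^ m * T / 2 ≤ (adjPairCount d P N A B' : ℝ) := by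
        rw [← pairCount_eq_adj]; exact hhalf
      have hAPC : (adjPairCount d P N A B' : ℝ) - (A.card : ℝ) * tE m ≤
          (adjPairCount d P N A' B' : ℝ) := by
        have h1 : (adjPairCount d P N A B' : ℝ) = ∑ y ∈ A, ((degE d P N B' y : ℕ) : ℝ) := by
          rw [adjPairCount_eq_sum]; push_cast; ring
        have h2 : (adjPairCount d P N A' B' : ℝ) = ∑ y ∈ A', ((degE d P N B' y : ℕ) : ℝ) := by
          rw [adjPairCount_eq_sum]; push_cast; ring
        rw [h1, h2, hA']
        exact sum_filter_ge A (degE d P N B') (tE m) (htEpos m)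
      have hAcard : (A.card : ℝ) * tE m ≤ (1/4:ℝ) ^ m * T / 4 := by
        have hle : (A.card : ℝ) ≤ (E.card : ℝ) := by
          exact_mod_cast Finset.card_le_card hAE
        have hval : (E.card : ℝ) * tE m = (1/4:ℝ) ^ m * T / 4 := by
          rw [htEdef]
          exact aux_mul_div ((1/4:ℝ) ^ m * T) (E.card : ℝ) 4 hEc0 four_ne_zero
        calc (A.card : ℝ) * tE m ≤ (E.card : ℝ) * tE m :=
              mul_le_mul_of_nonneg_right hle (htEpos m)
          _ = _ := hval
      have hfinal : (1/4:ℝ) ^ (m+1) * T ≤ (adjPairCount d P N A' B' : ℝ) := by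
        have : (1/4:ℝ) ^ (m+1) * T = (1/4:ℝ) ^ m * T / 4 := by
          rw [pow_succ]; ring
        linarith
      rw [hg1, hg2]; exact hfinal
    intro m
    induction m with
    | zero =>
      have h0 : g 0 = (E, F) := by rw [hgdef]; rfl
      have hsub1 : (g 0).1 ⊆ E := by rw [h0]
      have hsub2 : (g 0).2 ⊆ F := by rw [h0]
      have hm : (1/4 : ℝ) ^ 0 * T ≤ (adjPairCount d P N (g 0).1 (g 0).2 : ℝ) := by
        rw [h0]
        rw [← pairCount_eq_adj]
        rw [← hTdef]
        simp
      exact ⟨hsub1, hsub2, hm, (step 0 hsub1 hsub2 hm).1⟩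
    | succ m ih =>
      obtain ⟨h1, h2, h3, _⟩ := ih
      have hs := step m h1 h2 h3
      have hsub1 : (g (m+1)).1 ⊆ E := by
        rw [hsucc m]
        exact (Finset.filter_subset _ _).trans h1
      have hsub2 : (g (m+1)).2 ⊆ F := by
        rw [hsucc m]
        exact (Finset.filter_subset _ _).trans h2
      exact ⟨hsub1, hsub2, hs.2, (step (m+1) hsub1 hsub2 hs.2).1⟩
  -- now read off the four properties
  intro j hj1 hjk
  obtain ⟨m, rfl⟩ : ∃ m, j = m + 1 := ⟨j - 1, (Nat.succ_pred_eq_of_pos hj1).symm⟩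
  simp only [Nat.add_sub_cancel]
  have hz : (0:ℝ) ≤ (1/4:ℝ) ^ m * T := by positivity
  obtain ⟨hAE, hBF, hmass, hhalf⟩ := key m
  have hx2 : (g (m+1)).2 = (g m).2.filter (fun x => tF m ≤ (degF d P N (g m).1 x : ℝ)) := by
    rw [hsucc m]
  have hx1 : (g (m+1)).1 = (g m).1.filter (fun y => tE m ≤
      (degE d P N ((g m).2.filter (fun x => tF m ≤ (degF d P N (g m).1 x : ℝ))) y : ℝ)) := by
    rw [hsucc m]
  refine ⟨?_, ?_, ?_, ?_, ?_, ?_⟩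
  · rw [hx2]; exact Finset.filter_subset _ _
  · rw [hx1]; exact Finset.filter_subset _ _
  · -- (a)
    intro x hx
    rw [hx2] at hx
    have hdeg : tF m ≤ (degF d P N (g m).1 x : ℝ) := (Finset.mem_filter.mp hx).2
    have heq : (1/4:ℝ) ^ (m+1) * ((T:ℝ) / (F.card:ℝ)) ≤ tF m := by
      rw [htFdef, pow_succ]
      exact aux_div_le ((1/4:ℝ) ^ m) T F.card (by positivity) hTpos.le hFc
    calc (1/4:ℝ) ^ (m+1) * ((T:ℝ) / (F.card:ℝ)) ≤ tF m := heq
      _ ≤ (degF d P N (g m).1 x : ℝ) := hdeg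
  · -- (b)
    have : (1/4:ℝ) ^ (m+1) * T ≤ (1/4:ℝ) ^ m * T / 2 := by
      rw [pow_succ]
      exact aux_quarter ((1/4:ℝ) ^ m) T hz
    linarith
  · -- (c)
    intro y hy
    rw [hx1] at hy
    have hdeg : tE m ≤ (degE d P N ((g m).2.filter
        (fun x => tF m ≤ (degF d P N (g m).1 x : ℝ))) y : ℝ) := (Finset.mem_filter.mp hy).2
    have heq : (1/4:ℝ) ^ (m+1) * ((T:ℝ) / (E.card:ℝ)) = tE m := by
      rw [htEdef, pow_succ]
      exact aux_div_eq ((1/4:ℝ) ^ m) T E.card hEc0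
    rw [heq]
    calc tE m ≤ _ := hdeg
      _ = _ := by rw [← hx2]; rfl
  · -- (d)
    exact (key (m+1)).2.2.1
end

section
/- For every polynomial P ∈ ℤ[X] with deg P ≥ 2 and every ε > 0 there exists a constant C = C(P, ε) > 0 such that for every integer N ≥ 1 and every nonzero integer z, the number of pairs (n_1, m_1) ∈ {1,…,N}^2 satisfying P(n_1) − P(m_1) = z is at most C · N^{ε}. -/
open Finset Polynomial

lemma prime_factor_bound (ε : ℝ) (hε : 0 < ε) (p a : ℕ) (hp : p.Prime) (ha : 1 ≤ a) :
    ((a : ℝ) + 1) ≤ (if (p:ℝ) ^ ε < 2 then max 1 (2 / (ε * Real.log 2)) else 1)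
      * (p:ℝ) ^ ((a:ℝ) * ε) := by
  have hp2 : (2:ℝ) ≤ (p:ℝ) := by exact_mod_cast hp.two_le
  have hppos : (0:ℝ) < p := by linarith
  have hlog2 : (0:ℝ) < Real.log 2 := Real.log_pos (by norm_num)
  have hbase : (2:ℝ) ^ ((a:ℝ) * ε) ≤ (p:ℝ) ^ ((a:ℝ) * ε) :=
    Real.rpow_le_rpow (by norm_num) hp2 (by positivity)
  split_ifs with h
  · -- small prime case
    have h1 : (a:ℝ) * ε * Real.log 2 ≤ (2:ℝ) ^ ((a:ℝ) * ε) := by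
      rw [Real.rpow_def_of_pos (by norm_num)]
      calc (a:ℝ) * ε * Real.log 2 = Real.log 2 * ((a:ℝ) * ε) := by ring
      _ ≤ Real.exp (Real.log 2 * ((a:ℝ) * ε)) := (Real.add_one_le_exp _).trans' (by linarith)
    have hM : (2 / (ε * Real.log 2)) ≤ max 1 (2 / (ε * Real.log 2)) := le_max_right _ _
    have ha1 : (1:ℝ) ≤ (a:ℝ) := by exact_mod_cast ha
    have key : (2 / (ε * Real.log 2)) * ((a:ℝ) * ε * Real.log 2) = 2 * a := by
      field_simp
    have hmul : (2 / (ε * Real.log 2)) * ((a:ℝ) * ε * Real.log 2)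
        ≤ max 1 (2 / (ε * Real.log 2)) * (p:ℝ) ^ ((a:ℝ) * ε) := by
      apply mul_le_mul hM (h1.trans hbase) (by positivity)
      positivity
    rw [key] at hmul
    linarith
  · push_neg at h
    rw [one_mul]
    have h2a : ((a:ℝ) + 1) ≤ (2:ℝ) ^ (a:ℝ) := by
      rw [Real.rpow_natCast]
      exact_mod_cast Nat.succ_le_of_lt (a.lt_two_pow_self)
    calc ((a:ℝ) + 1) ≤ (2:ℝ) ^ (a:ℝ) := h2a
    _ ≤ ((p:ℝ) ^ ε) ^ (a:ℝ) := Real.rpow_le_rpow (by norm_num) h (by positivity)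
    _ = (p:ℝ) ^ ((a:ℝ) * ε) := by
        rw [mul_comm ((a:ℝ)) ε, Real.rpow_mul hppos.le]

lemma tau_bound (ε : ℝ) (hε : 0 < ε) : ∃ C : ℝ, 0 < C ∧ ∀ n : ℕ, n ≠ 0 →
    (n.divisors.card : ℝ) ≤ C * (n:ℝ) ^ ε := by
  classical
  set M : ℝ := max 1 (2 / (ε * Real.log 2)) with hMdef
  have hM1 : (1:ℝ) ≤ M := le_max_left _ _
  set B : ℕ := ⌊(2:ℝ) ^ (1/ε)⌋₊ + 1 with hBdef
  refine ⟨M ^ B, by positivity, fun n hn => ?_⟩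
  have hcard : (n.divisors.card : ℝ) = ∏ p ∈ n.primeFactors, ((n.factorization p : ℝ) + 1) := by
    rw [Nat.card_divisors hn]
    push_cast
    rfl
  have hself : (n:ℝ) = ∏ p ∈ n.primeFactors, ((p:ℝ) ^ (n.factorization p)) := by
    conv_lhs => rw [← Nat.factorization_prod_pow_eq_self hn]
    rw [Nat.prod_factorization_eq_prod_primeFactors]
    push_cast
    rfl
  have hrpow : (n:ℝ) ^ ε = ∏ p ∈ n.primeFactors, (p:ℝ) ^ ((n.factorization p : ℝ) * ε) := by
    rw [hself, ← Real.finset_prod_rpow _ _ (fun p _ => by positivity)]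
    apply Finset.prod_congr rfl
    intro p hp
    rw [← Real.rpow_natCast (p:ℝ) (n.factorization p), ← Real.rpow_mul (by positivity)]
  have step1 : (n.divisors.card : ℝ) ≤
      (∏ p ∈ n.primeFactors, (if (p:ℝ) ^ ε < 2 then M else 1)) *
      (∏ p ∈ n.primeFactors, (p:ℝ) ^ ((n.factorization p : ℝ) * ε)) := by
    rw [← Finset.prod_mul_distrib, hcard]
    apply Finset.prod_le_prod (fun p _ => by positivity)
    intro p hp
    exact prime_factor_bound ε hε p _ (Nat.prime_of_mem_primeFactors hp)
      ((Nat.Prime.factorization_pos_of_dvd (Nat.prime_of_mem_primeFactors hp) hn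
        (Nat.dvd_of_mem_primeFactors hp)))
  have hsub : n.primeFactors.filter (fun p : ℕ => (p:ℝ) ^ ε < 2) ⊆ Finset.range B := by
    intro p hp
    simp only [Finset.mem_filter] at hp
    rw [Finset.mem_range, hBdef, Nat.lt_succ_iff]
    apply Nat.le_floor
    have hppos : (0:ℝ) ≤ (p:ℝ) := by positivity
    calc (p:ℝ) = ((p:ℝ) ^ ε) ^ (1/ε) := by
          rw [← Real.rpow_mul hppos, mul_one_div, div_self hε.ne', Real.rpow_one]
    _ ≤ (2:ℝ) ^ (1/ε) := Real.rpow_le_rpow (by positivity) hp.2.le (by positivity)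
  have step2 : (∏ p ∈ n.primeFactors, (if (p:ℝ) ^ ε < 2 then M else 1)) ≤ M ^ B := by
    rw [← Finset.prod_filter_mul_prod_filter_not n.primeFactors (fun p : ℕ => (p:ℝ) ^ ε < 2)]
    have h2 : ∏ p ∈ n.primeFactors.filter (fun p : ℕ => ¬ (p:ℝ) ^ ε < 2),
        (if (p:ℝ) ^ ε < 2 then M else 1) = 1 :=
      Finset.prod_eq_one (fun p hp => if_neg (Finset.mem_filter.mp hp).2)
    have h3 : ∏ p ∈ n.primeFactors.filter (fun p : ℕ => (p:ℝ) ^ ε < 2),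
        (if (p:ℝ) ^ ε < 2 then M else 1)
        = M ^ (n.primeFactors.filter (fun p : ℕ => (p:ℝ) ^ ε < 2)).card := by
      rw [Finset.prod_congr rfl (fun p hp => if_pos (Finset.mem_filter.mp hp).2),
        Finset.prod_const]
    rw [h2, h3, mul_one]
    exact pow_le_pow_right₀ hM1 ((Finset.card_le_card hsub).trans (by simp))
  calc (n.divisors.card : ℝ) ≤ _ := step1
  _ ≤ M ^ B * (∏ p ∈ n.primeFactors, (p:ℝ) ^ ((n.factorization p : ℝ) * ε)) := by
      apply mul_le_mul_of_nonneg_right step2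
      exact Finset.prod_nonneg (fun p _ => by positivity)
  _ = M ^ B * (n:ℝ) ^ ε := by rw [hrpow]


lemma Q_ne_zero (P : Polynomial ℤ) (hP : 2 ≤ P.natDegree) (z d : ℤ) (hz : z ≠ 0) :
    Polynomial.taylor d P - P - Polynomial.C z ≠ 0 := by
  rcases eq_or_ne d 0 with rfl | hd
  · simp only [Polynomial.taylor_zero, sub_self, zero_sub, ne_eq, neg_eq_zero,
      Polynomial.C_eq_zero]
    exact hz
  · intro h
    set k := P.natDegree with hk
    have hk1 : 1 ≤ k - 1 := by omega
    have hH : (Polynomial.hasseDeriv (k-1) P).natDegree ≤ 1 := by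
      have := Polynomial.natDegree_hasseDeriv_le P (k-1)
      omega
    have heval : (Polynomial.hasseDeriv (k-1) P).eval d
        = (Polynomial.hasseDeriv (k-1) P).coeff 0 + (Polynomial.hasseDeriv (k-1) P).coeff 1 * d := by
      rw [Polynomial.eval_eq_sum_range' (lt_of_le_of_lt hH (by norm_num : (1:ℕ) < 2))]
      simp [Finset.sum_range_succ]
    have hc0 : (Polynomial.hasseDeriv (k-1) P).coeff 0 = P.coeff (k-1) := by
      rw [Polynomial.hasseDeriv_coeff]
      simp
    have hc1 : (Polynomial.hasseDeriv (k-1) P).coeff 1 = (k : ℤ) * P.coeff k := by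
      rw [Polynomial.hasseDeriv_coeff]
      have h1 : 1 + (k - 1) = k := by omega
      rw [h1]
      have hch : k.choose (k-1) = k := by
        have h2 := Nat.choose_symm (Nat.sub_le k 1)
        rw [Nat.sub_sub_self (by omega : 1 ≤ k), Nat.choose_one_right] at h2
        exact h2.symm
      rw [hch]
    have hcoeff : (Polynomial.taylor d P - P - Polynomial.C z).coeff (k-1)
        = (k : ℤ) * P.coeff k * d := by
      rw [Polynomial.coeff_sub, Polynomial.coeff_sub, Polynomial.taylor_coeff,
        Polynomial.coeff_C, if_neg (by omega : ¬ (k-1 = 0)), heval, hc0, hc1]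
      ring
    rw [h, Polynomial.coeff_zero] at hcoeff
    have hPne : P ≠ 0 := Polynomial.ne_zero_of_natDegree_gt (show 0 < P.natDegree by omega)
    have hlead : P.coeff k ≠ 0 := Polynomial.leadingCoeff_ne_zero.mpr hPne
    have : (k:ℤ) ≠ 0 := by exact_mod_cast (by omega : k ≠ 0)
    exact (mul_ne_zero (mul_ne_zero this hlead) hd) hcoeff.symm

lemma Q_natDegree (P : Polynomial ℤ) (z d : ℤ) :
    (Polynomial.taylor d P - P - Polynomial.C z).natDegree ≤ P.natDegree := by
  apply le_trans (Polynomial.natDegree_sub_le _ _)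
  simp only [Polynomial.natDegree_C, max_le_iff]
  refine ⟨le_trans (Polynomial.natDegree_sub_le _ _) ?_, Nat.zero_le _⟩
  simp [Polynomial.natDegree_taylor]

-- fiber bound
lemma fiber_bound (P : Polynomial ℤ) (hP : 2 ≤ P.natDegree) (z d : ℤ) (hz : z ≠ 0)
    (N : ℕ) :
    ((((Finset.Icc (1:ℤ) (N:ℤ)) ×ˢ (Finset.Icc (1:ℤ) (N:ℤ))).filter
        (fun t => P.eval t.1 - P.eval t.2 = z ∧ t.1 - t.2 = d)).card) ≤ P.natDegree := by
  classical
  set Q := Polynomial.taylor d P - P - Polynomial.C z with hQ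
  have hQne := Q_ne_zero P hP z d hz
  have hroots : ∀ t : ℤ × ℤ, t ∈ (((Finset.Icc (1:ℤ) (N:ℤ)) ×ˢ (Finset.Icc (1:ℤ) (N:ℤ))).filter
      (fun t => P.eval t.1 - P.eval t.2 = z ∧ t.1 - t.2 = d)) → t.2 ∈ Q.roots.toFinset := by
    intro t ht
    simp only [Finset.mem_filter] at ht
    rw [Multiset.mem_toFinset, Polynomial.mem_roots hQne]
    show Q.eval t.2 = 0
    rw [hQ]
    simp only [Polynomial.eval_sub, Polynomial.taylor_eval, Polynomial.eval_C]
    have : t.2 + d = t.1 := by linarith [ht.2.2]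
    rw [this]
    linarith [ht.2.1]
  have hinj : Set.InjOn (fun t : ℤ × ℤ => t.2) ↑(((Finset.Icc (1:ℤ) (N:ℤ)) ×ˢ (Finset.Icc (1:ℤ) (N:ℤ))).filter
      (fun t => P.eval t.1 - P.eval t.2 = z ∧ t.1 - t.2 = d)) := by
    intro a ha b hb hab
    simp only [Finset.coe_filter, Set.mem_setOf_eq] at ha hb
    have ha1 : a.1 = a.2 + d := by linarith [ha.2.2]
    have hb1 : b.1 = b.2 + d := by linarith [hb.2.2]
    have hab' : a.2 = b.2 := hab
    exact Prod.ext (by rw [ha1, hb1, hab']) hab'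
  calc _ ≤ Q.roots.toFinset.card := Finset.card_le_card_of_injOn _ hroots hinj
  _ ≤ Multiset.card Q.roots := Q.roots.toFinset_card_le
  _ ≤ Q.natDegree := Polynomial.card_roots' Q
  _ ≤ P.natDegree := Q_natDegree P z d


lemma eval_bound_s9 (P : Polynomial ℤ) (N : ℕ) (hN : 1 ≤ N) (t : ℤ)
    (ht : t ∈ Finset.Icc (1:ℤ) (N:ℤ)) :
    |P.eval t| ≤ (∑ i ∈ Finset.range (P.natDegree + 1), |P.coeff i|) * (N:ℤ) ^ P.natDegree := by
  rw [Finset.mem_Icc] at ht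
  have hN1 : (1:ℤ) ≤ (N:ℤ) := by exact_mod_cast hN
  rw [Polynomial.eval_eq_sum_range, Finset.sum_mul]
  apply le_trans (Finset.abs_sum_le_sum_abs _ _)
  apply Finset.sum_le_sum
  intro i hi
  rw [Finset.mem_range] at hi
  rw [abs_mul, abs_pow]
  apply mul_le_mul_of_nonneg_left _ (abs_nonneg _)
  calc |t| ^ i ≤ (N:ℤ) ^ i := by
        apply pow_le_pow_left₀ (abs_nonneg t)
        rw [abs_le]; constructor <;> linarith [ht.1, ht.2]
  _ ≤ (N:ℤ) ^ P.natDegree := pow_le_pow_right₀ hN1 (by omega)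



lemma count_le (P : Polynomial ℤ) (hP : 2 ≤ P.natDegree) (N : ℕ) (z : ℤ) (hz : z ≠ 0) :
    (((Finset.Icc (1:ℤ) (N:ℤ)) ×ˢ (Finset.Icc (1:ℤ) (N:ℤ))).filter
        (fun t => P.eval t.1 - P.eval t.2 = z)).card
      ≤ P.natDegree * (2 * z.natAbs.divisors.card) := by
  classical
  set S := ((Finset.Icc (1:ℤ) (N:ℤ)) ×ˢ (Finset.Icc (1:ℤ) (N:ℤ))).filter
      (fun t => P.eval t.1 - P.eval t.2 = z) with hS
  have hcard : S.card = ∑ d ∈ S.image (fun t : ℤ × ℤ => t.1 - t.2),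
      (S.filter (fun t => t.1 - t.2 = d)).card :=
    Finset.card_eq_sum_card_image _ _
  have hfib : ∀ d ∈ S.image (fun t : ℤ × ℤ => t.1 - t.2),
      (S.filter (fun t => t.1 - t.2 = d)).card ≤ P.natDegree := by
    intro d _
    rw [hS, Finset.filter_filter]
    exact fiber_bound P hP z d hz N
  have h1 : S.card ≤ P.natDegree * (S.image (fun t : ℤ × ℤ => t.1 - t.2)).card := by
    rw [hcard]
    calc ∑ d ∈ S.image (fun t : ℤ × ℤ => t.1 - t.2), (S.filter (fun t => t.1 - t.2 = d)).card
        ≤ ∑ _d ∈ S.image (fun t : ℤ × ℤ => t.1 - t.2), P.natDegree := Finset.sum_le_sum hfib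
    _ = _ := by rw [Finset.sum_const, smul_eq_mul, Nat.mul_comm]
  have h2 : (S.image (fun t : ℤ × ℤ => t.1 - t.2)).card
      ≤ 2 * ((S.image (fun t : ℤ × ℤ => t.1 - t.2)).image Int.natAbs).card := by
    apply Finset.card_le_mul_card_image
    intro b _
    calc ((S.image (fun t : ℤ × ℤ => t.1 - t.2)).filter (fun x => x.natAbs = b)).card
        ≤ ({(b:ℤ), -(b:ℤ)} : Finset ℤ).card := by
          apply Finset.card_le_card
          intro x hx
          simp only [Finset.mem_filter] at hx
          simp only [Finset.mem_insert, Finset.mem_singleton]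
          exact Int.natAbs_eq_iff.mp hx.2
    _ ≤ 2 := Finset.card_insert_le _ _ |>.trans (by simp)
  have h3 : ((S.image (fun t : ℤ × ℤ => t.1 - t.2)).image Int.natAbs) ⊆ z.natAbs.divisors := by
    intro v hv
    simp only [Finset.mem_image] at hv
    obtain ⟨d, hd, rfl⟩ := hv
    obtain ⟨t, ht, rfl⟩ := hd
    rw [hS, Finset.mem_filter] at ht
    rw [Nat.mem_divisors]
    refine ⟨Int.natAbs_dvd_natAbs.mpr ?_, Int.natAbs_ne_zero.mpr hz⟩
    rw [← ht.2]
    exact Polynomial.sub_dvd_eval_sub t.1 t.2 P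
  calc S.card ≤ P.natDegree * (S.image (fun t : ℤ × ℤ => t.1 - t.2)).card := h1
  _ ≤ P.natDegree * (2 * ((S.image (fun t : ℤ × ℤ => t.1 - t.2)).image Int.natAbs).card) :=
      Nat.mul_le_mul_left _ h2
  _ ≤ P.natDegree * (2 * z.natAbs.divisors.card) := by
      have := Finset.card_le_card h3
      exact Nat.mul_le_mul_left _ (Nat.mul_le_mul_left _ this)


/-- for a polynomial P of degree ≥ 2 and any nonzero integer z, the
number of pairs (n₁, m₁) ∈ [1,N]² with P(n₁) − P(m₁) = z is O_{P,ε}(N^ε). -/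
theorem stmt9 (P : Polynomial ℤ) (hP : 2 ≤ P.natDegree) (ε : ℝ) (hε : 0 < ε) :
    ∃ C : ℝ, 0 < C ∧ ∀ N : ℕ, 1 ≤ N → ∀ z : ℤ, z ≠ 0 →
      ((((Finset.Icc (1:ℤ) (N:ℤ)) ×ˢ (Finset.Icc (1:ℤ) (N:ℤ))).filter
          (fun t => P.eval t.1 - P.eval t.2 = z)).card : ℝ) ≤ C * (N:ℝ) ^ ε := by
  classical
  set k := P.natDegree with hk
  have hk0 : 0 < k := by omega
  have hkR : (0:ℝ) < (k:ℝ) := by exact_mod_cast hk0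
  set δ : ℝ := ε / k with hδdef
  have hδ : 0 < δ := div_pos hε hkR
  obtain ⟨C₀, hC₀, htau⟩ := tau_bound δ hδ
  set A : ℤ := ∑ i ∈ Finset.range (k + 1), |P.coeff i| with hA
  have hA0 : 0 ≤ A := Finset.sum_nonneg (fun i _ => abs_nonneg _)
  set A' : ℝ := 2 * (A:ℝ) + 1 with hA'
  have hA'1 : (1:ℝ) ≤ A' := by
    have : (0:ℝ) ≤ (A:ℝ) := by exact_mod_cast hA0
    rw [hA']; linarith
  have hA'0 : (0:ℝ) < A' := by linarith
  refine ⟨2 * k * C₀ * A' ^ δ, by positivity, fun N hN z hz => ?_⟩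
  set S := ((Finset.Icc (1:ℤ) (N:ℤ)) ×ˢ (Finset.Icc (1:ℤ) (N:ℤ))).filter
      (fun t => P.eval t.1 - P.eval t.2 = z) with hS
  have hNR : (1:ℝ) ≤ (N:ℝ) := by exact_mod_cast hN
  rcases S.eq_empty_or_nonempty with hemp | ⟨t, ht⟩
  · rw [hemp]
    simp only [Finset.card_empty, Nat.cast_zero]
    positivity
  · have hzbound : (z.natAbs : ℝ) ≤ A' * (N:ℝ) ^ (k:ℕ) := by
      rw [hS, Finset.mem_filter, Finset.mem_product] at ht
      obtain ⟨⟨ht1, ht2⟩, htz⟩ := ht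
      have h1 := eval_bound_s9 P N hN t.1 ht1
      have h2 := eval_bound_s9 P N hN t.2 ht2
      have habs : |z| ≤ 2 * A * (N:ℤ) ^ k := by
        rw [← htz]
        calc |P.eval t.1 - P.eval t.2| ≤ |P.eval t.1| + |P.eval t.2| := abs_sub _ _
        _ ≤ 2 * A * (N:ℤ) ^ k := by rw [← hk] at h1 h2; rw [hA]; linarith
      have habsR : |(z:ℝ)| ≤ 2 * (A:ℝ) * (N:ℝ) ^ (k:ℕ) := by exact_mod_cast habs
      have hNk1 : (0:ℝ) < (N:ℝ) ^ (k:ℕ) := by positivity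
      calc (z.natAbs : ℝ) = |(z:ℝ)| := by
            rw [Nat.cast_natAbs]; norm_num
      _ ≤ 2 * (A:ℝ) * (N:ℝ) ^ (k:ℕ) := habsR
      _ ≤ A' * (N:ℝ) ^ (k:ℕ) := by
            apply mul_le_mul_of_nonneg_right _ hNk1.le
            rw [hA']; linarith
    have hτ := htau z.natAbs (Int.natAbs_ne_zero.mpr hz)
    calc ((S.card : ℕ) : ℝ) ≤ ((k * (2 * z.natAbs.divisors.card) : ℕ) : ℝ) := by
          exact_mod_cast count_le P hP N z hz
    _ = 2 * k * (z.natAbs.divisors.card : ℝ) := by push_cast; ring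
    _ ≤ 2 * k * (C₀ * ((z.natAbs : ℕ) : ℝ) ^ δ) := by
          apply mul_le_mul_of_nonneg_left hτ (by positivity)
    _ ≤ 2 * k * (C₀ * (A' * (N:ℝ) ^ (k:ℕ)) ^ δ) := by
          apply mul_le_mul_of_nonneg_left
            (mul_le_mul_of_nonneg_left
              (Real.rpow_le_rpow (by positivity) hzbound hδ.le) hC₀.le) (by positivity)
    _ = 2 * k * C₀ * A' ^ δ * (N:ℝ) ^ ε := by
          rw [Real.mul_rpow hA'0.le (by positivity), ← Real.rpow_natCast (N:ℝ) k,
            ← Real.rpow_mul (by linarith : (0:ℝ) ≤ (N:ℝ))]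
          have hkδ : (k:ℝ) * δ = ε := by
            rw [hδdef]; field_simp
          rw [hkδ]; ring
end

section
/- Let P ∈ ℤ[X] with deg P ≥ 2. Then there exists a nonzero polynomial Q ∈ ℤ[X, Y, Z] such that P(X) − P(Y) + P(Z) − P(X − Y + Z) = Q(X, Y, Z) · (X − Y) · (Y − Z) identically, and moreover for all integers n, m the univariate polynomial Z ↦ Q(n, m, Z) is not identically zero. -/
open Polynomial MvPolynomial Finset

namespace Stmt13Aux

noncomputable abbrev R3 := MvPolynomial (Fin 3) ℤ

noncomputable def dd (a b : R3) (n : ℕ) : R3 := ∑ i ∈ range n, a ^ i * b ^ (n - 1 - i)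

lemma dd_mul (a b : R3) (n : ℕ) : dd a b n * (a - b) = a ^ n - b ^ n := geom_sum₂_mul a b n

noncomputable def xx : R3 := MvPolynomial.X 0
noncomputable def yy : R3 := MvPolynomial.X 1
noncomputable def zz : R3 := MvPolynomial.X 2
noncomputable def ww : R3 := xx - yy + zz

noncomputable def qk (k : ℕ) : R3 :=
  ∑ i ∈ range k, (dd xx yy i * ww ^ (k - 1 - i) + yy ^ i * dd ww zz (k - 1 - i))

lemma qk_mul (k : ℕ) :
    qk k * (xx - yy) * (yy - zz) = xx ^ k - yy ^ k + zz ^ k - ww ^ k := by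
  have h1 : qk k * (xx - yy) = dd xx ww k - dd yy zz k := by
    rw [qk, Finset.sum_mul, dd, dd, ← Finset.sum_sub_distrib]
    refine Finset.sum_congr rfl fun i _ => ?_
    have e1 : dd xx yy i * (xx - yy) = xx ^ i - yy ^ i := dd_mul _ _ _
    have e2 : dd ww zz (k-1-i) * (ww - zz) = ww ^ (k-1-i) - zz ^ (k-1-i) := dd_mul _ _ _
    have hwz : ww - zz = xx - yy := by rw [ww]; ring
    calc (dd xx yy i * ww ^ (k - 1 - i) + yy ^ i * dd ww zz (k - 1 - i)) * (xx - yy)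
        = (dd xx yy i * (xx - yy)) * ww ^ (k-1-i)
            + yy ^ i * (dd ww zz (k-1-i) * (ww - zz)) := by rw [hwz]; ring
      _ = xx ^ i * ww ^ (k - 1 - i) - yy ^ i * zz ^ (k - 1 - i) := by rw [e1, e2]; ring
  rw [h1]
  have hxw : yy - zz = xx - ww := by rw [ww]; ring
  calc (dd xx ww k - dd yy zz k) * (yy - zz)
      = dd xx ww k * (xx - ww) - dd yy zz k * (yy - zz) := by rw [hxw]; ring
    _ = (xx ^ k - ww ^ k) - (yy ^ k - zz ^ k) := by rw [dd_mul, dd_mul]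
    _ = _ := by ring

noncomputable def QQ (P : Polynomial ℤ) : R3 := P.sum fun k c => MvPolynomial.C c * qk k

lemma QQ_add (p q : Polynomial ℤ) : QQ (p + q) = QQ p + QQ q := by
  rw [QQ, QQ, QQ, Polynomial.sum_add_index] <;> intros <;> simp [map_add, add_mul]

lemma QQ_monomial (n : ℕ) (t : ℤ) : QQ (Polynomial.monomial n t) = MvPolynomial.C t * qk n := by
  rw [QQ, Polynomial.sum_monomial_index]; simp

lemma QQ_identity (P : Polynomial ℤ) :
    Polynomial.aeval xx P - Polynomial.aeval yy P + Polynomial.aeval zz P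
        - Polynomial.aeval ww P = QQ P * (xx - yy) * (yy - zz) := by
  induction P using Polynomial.induction_on' with
  | add p q hp hq =>
      rw [QQ_add]
      simp only [map_add]
      linear_combination hp + hq
  | monomial n t =>
      rw [QQ_monomial]
      simp only [Polynomial.aeval_monomial, MvPolynomial.algebraMap_eq]
      linear_combination (-(MvPolynomial.C t)) * qk_mul n

lemma taylor_coeff_sub_one (P : Polynomial ℤ) (c : ℤ) (hP : 2 ≤ P.natDegree) :
    (Polynomial.taylor c P).coeff (P.natDegree - 1)
      = P.coeff (P.natDegree - 1) + P.natDegree * P.leadingCoeff * c := by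
  set d := P.natDegree with hd
  rw [Polynomial.taylor_coeff]
  have hdeg : (Polynomial.hasseDeriv (d-1) P).natDegree < 2 :=
    lt_of_le_of_lt (Polynomial.natDegree_hasseDeriv_le P (d-1)) (by omega)
  rw [Polynomial.eval_eq_sum_range' hdeg, Finset.sum_range_succ, Finset.sum_range_one,
    Polynomial.hasseDeriv_coeff, Polynomial.hasseDeriv_coeff]
  have e1 : 0 + (d-1) = d - 1 := by omega
  have e2 : 1 + (d-1) = d := by omega
  rw [e1, e2, Nat.choose_self, Nat.choose_symm (by omega : 1 ≤ d), Nat.choose_one_right]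
  have : P.coeff d = P.leadingCoeff := rfl
  rw [this]
  push_cast
  ring

lemma taylor_coeff_ge (P : Polynomial ℤ) (c : ℤ) (k : ℕ) (hk : P.natDegree ≤ k) :
    (Polynomial.taylor c P).coeff k = P.coeff k := by
  rcases eq_or_lt_of_le hk with h | h
  · subst h
    rw [Polynomial.taylor_coeff]
    have hdeg : (Polynomial.hasseDeriv P.natDegree P).natDegree < 1 :=
      lt_of_le_of_lt (Polynomial.natDegree_hasseDeriv_le P P.natDegree) (by omega)
    rw [Polynomial.eval_eq_sum_range' hdeg, Finset.sum_range_one,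
      Polynomial.hasseDeriv_coeff]
    simp
  · rw [Polynomial.coeff_eq_zero_of_natDegree_lt (by rwa [Polynomial.natDegree_taylor]),
      Polynomial.coeff_eq_zero_of_natDegree_lt h]

noncomputable def σfun (n m : ℤ) : Fin 3 → Polynomial ℤ :=
  fun i => if i = 0 then Polynomial.C n else if i = 1 then Polynomial.C m
    else (Polynomial.X : Polynomial ℤ)

lemma coeff_spec (P : Polynomial ℤ) (hP : 2 ≤ P.natDegree) (n m : ℤ) (hnm : n ≠ m) :
    (MvPolynomial.aeval (σfun n m) (QQ P)).coeff (P.natDegree - 2)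
      = P.natDegree * P.leadingCoeff := by
  have hPne : P ≠ 0 := fun h => by simp [h] at hP
  have ha : P.leadingCoeff ≠ 0 := Polynomial.leadingCoeff_ne_zero.mpr hPne
  set d := P.natDegree with hd
  set a := P.leadingCoeff with haa
  set c := n - m with hcc
  have hc : c ≠ 0 := sub_ne_zero.mpr hnm
  set r := MvPolynomial.aeval (σfun n m) (QQ P) with hr
  have hx : MvPolynomial.aeval (σfun n m) xx = Polynomial.C n := by simp [xx, σfun]
  have hy : MvPolynomial.aeval (σfun n m) yy = Polynomial.C m := by simp [yy, σfun]
  have hz : MvPolynomial.aeval (σfun n m) zz = (Polynomial.X : Polynomial ℤ) := by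
    simp [zz, σfun]
  have hw : MvPolynomial.aeval (σfun n m) ww
      = Polynomial.C n - Polynomial.C m + Polynomial.X := by
    simp [ww, xx, yy, zz, σfun]
  have hid0 := congrArg (MvPolynomial.aeval (σfun n m)) (QQ_identity P)
  simp only [map_sub, map_add, map_mul, ← Polynomial.aeval_algHom_apply,
    hx, hy, hz, hw] at hid0
  have hCn : Polynomial.aeval (Polynomial.C n) P = Polynomial.C (Polynomial.aeval n P) := by
    rw [← Polynomial.CAlgHom_apply (R := ℤ) n, Polynomial.aeval_algHom_apply]; simp
  have hCm : Polynomial.aeval (Polynomial.C m) P = Polynomial.C (Polynomial.aeval m P) := by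
    rw [← Polynomial.CAlgHom_apply (R := ℤ) m, Polynomial.aeval_algHom_apply]; simp
  have hz' : Polynomial.aeval (Polynomial.X : Polynomial ℤ) P = P :=
    Polynomial.aeval_X_left_apply P
  have hCw : Polynomial.aeval (Polynomial.C n - Polynomial.C m + Polynomial.X) P
      = Polynomial.taylor c P := by
    rw [Polynomial.taylor_apply, Polynomial.comp, Polynomial.aeval_def,
      (Subsingleton.elim (algebraMap ℤ (Polynomial ℤ)) Polynomial.C)]
    congr 1
    rw [hcc, map_sub]; ring
  rw [hCn, hCm, hz', hCw] at hid0
  set A := Polynomial.C (Polynomial.aeval n P) - Polynomial.C (Polynomial.aeval m P) + P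
    - Polynomial.taylor c P with hA
  have hCc : Polynomial.C n - Polynomial.C m = Polynomial.C c := by rw [hcc, map_sub]
  have hid' : A = r * (Polynomial.C c * (Polynomial.C m - Polynomial.X)) := by
    rw [hid0, hCc]; ring
  have hA1 : A.coeff (d-1) = -(d * a * c) := by
    rw [hA, Polynomial.coeff_sub, Polynomial.coeff_add, Polynomial.coeff_sub,
      Polynomial.coeff_C, Polynomial.coeff_C, taylor_coeff_sub_one P c hP,
      if_neg (by omega : ¬ (d - 1 = 0)), if_neg (by omega : ¬ (d - 1 = 0))]
    ring
  have hAdeg : A.natDegree ≤ d - 1 := by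
    rw [Polynomial.natDegree_le_iff_coeff_eq_zero]
    intro N hN
    rw [hA, Polynomial.coeff_sub, Polynomial.coeff_add, Polynomial.coeff_sub,
      Polynomial.coeff_C, Polynomial.coeff_C, taylor_coeff_ge P c N (by omega),
      if_neg (by omega : ¬ (N = 0)), if_neg (by omega : ¬ (N = 0))]
    ring
  have hdZ : (d : ℤ) ≠ 0 := Int.natCast_ne_zero.mpr (by omega)
  have hrne : r ≠ 0 := by
    intro h0
    have h00 : A = 0 := by rw [hid', h0]; ring
    rw [h00, Polynomial.coeff_zero] at hA1
    have : (d : ℤ) * a * c ≠ 0 := mul_ne_zero (mul_ne_zero hdZ ha) hc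
    omega
  have hCcne : (Polynomial.C c : Polynomial ℤ) ≠ 0 := by
    simpa using hc
  have hB1 : (Polynomial.C m - Polynomial.X : Polynomial ℤ).natDegree = 1 := by
    rw [(by ring : (Polynomial.C m - Polynomial.X : Polynomial ℤ)
        = -(Polynomial.X - Polynomial.C m)), Polynomial.natDegree_neg,
      Polynomial.natDegree_X_sub_C]
  have hBne : (Polynomial.C m - Polynomial.X : Polynomial ℤ) ≠ 0 := by
    intro h; rw [h] at hB1; simp at hB1
  have hABn : A.natDegree = r.natDegree + 1 := by
    rw [hid', Polynomial.natDegree_mul hrne (mul_ne_zero hCcne hBne),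
      Polynomial.natDegree_C_mul hc, hB1]
  have hrdeg : r.natDegree ≤ d - 2 := by omega
  have hr1 : r.coeff (d-1) = 0 := Polynomial.coeff_eq_zero_of_natDegree_lt (by omega)
  have hmulX : (r * Polynomial.X).coeff (d-1) = r.coeff (d-2) := by
    rw [(by omega : d - 1 = (d - 2) + 1), Polynomial.coeff_mul_X]
  have hA2 : A.coeff (d-1) = c * (m * r.coeff (d-1)) - c * (r * Polynomial.X).coeff (d-1) := by
    rw [hid', (by ring : r * (Polynomial.C c * (Polynomial.C m - Polynomial.X))
        = Polynomial.C c * (Polynomial.C m * r) - Polynomial.C c * (r * Polynomial.X)),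
      Polynomial.coeff_sub, Polynomial.coeff_C_mul, Polynomial.coeff_C_mul,
      Polynomial.coeff_C_mul]
  rw [hmulX, hr1] at hA2
  refine mul_left_cancel₀ hc ?_
  rw [hA2] at hA1
  linear_combination -hA1

noncomputable def θv : Fin 3 → Polynomial (MvPolynomial (Fin 2) ℤ) :=
  fun i => if i = 0 then Polynomial.C (MvPolynomial.X 0)
    else if i = 1 then Polynomial.C (MvPolynomial.X 1) else Polynomial.X

lemma compat (v : Fin 2 → ℤ) :
    (Polynomial.mapAlgHom (MvPolynomial.aeval v)).comp
        (MvPolynomial.aeval θv : R3 →ₐ[ℤ] Polynomial (MvPolynomial (Fin 2) ℤ))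
      = MvPolynomial.aeval (σfun (v 0) (v 1)) := by
  apply MvPolynomial.algHom_ext
  intro i
  fin_cases i <;> simp [θv, σfun, Polynomial.mapAlgHom]

lemma coeff_eq (P : Polynomial ℤ) (v : Fin 2 → ℤ) (k : ℕ) :
    (MvPolynomial.aeval (σfun (v 0) (v 1)) (QQ P)).coeff k
      = MvPolynomial.eval v ((MvPolynomial.aeval θv (QQ P)).coeff k) := by
  rw [← compat v, AlgHom.comp_apply]
  simp [Polynomial.mapAlgHom, Polynomial.coeff_map, MvPolynomial.aeval_def,
    MvPolynomial.eval_eq']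

lemma coeff_const (P : Polynomial ℤ) (hP : 2 ≤ P.natDegree) (n m : ℤ) :
    (MvPolynomial.aeval (σfun n m) (QQ P)).coeff (P.natDegree - 2)
      = P.natDegree * P.leadingCoeff := by
  set G := (MvPolynomial.aeval θv (QQ P)).coeff (P.natDegree - 2) with hG
  have key : ∀ v : Fin 2 → ℤ,
      MvPolynomial.eval v ((G - MvPolynomial.C (P.natDegree * P.leadingCoeff))
        * (MvPolynomial.X 0 - MvPolynomial.X 1)) = 0 := by
    intro v
    rcases eq_or_ne (v 0) (v 1) with h | h
    · simp [h]
    · have h2 := coeff_spec P hP (v 0) (v 1) h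
      rw [coeff_eq P v] at h2
      simp [map_mul, map_sub, hG, h2]
  have hzero : (G - MvPolynomial.C ((P.natDegree : ℤ) * P.leadingCoeff))
      * (MvPolynomial.X 0 - MvPolynomial.X 1) = 0 :=
    MvPolynomial.funext (fun x => by rw [key x, map_zero])
  have hX01 : (MvPolynomial.X 0 - MvPolynomial.X 1 : MvPolynomial (Fin 2) ℤ) ≠ 0 :=
    sub_ne_zero.mpr (fun h => by
      have := MvPolynomial.X_injective (R := ℤ) h
      exact absurd this (by decide))
  have hGc : G = MvPolynomial.C ((P.natDegree : ℤ) * P.leadingCoeff) := by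
    rcases mul_eq_zero.mp hzero with h | h
    · exact sub_eq_zero.mp h
    · exact absurd h hX01
  have h3 := coeff_eq P ![n, m] (P.natDegree - 2)
  simp only [Matrix.cons_val_zero, Matrix.cons_val_one, Matrix.head_cons] at h3
  rw [h3, ← hG, hGc]
  simp

lemma nonvanish (P : Polynomial ℤ) (hP : 2 ≤ P.natDegree) (n m : ℤ) :
    MvPolynomial.aeval (σfun n m) (QQ P) ≠ 0 := by
  intro h0
  have h2 := coeff_const P hP n m
  rw [h0, Polynomial.coeff_zero] at h2
  have hPne : P ≠ 0 := fun h => by simp [h] at hP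
  have : (P.natDegree : ℤ) * P.leadingCoeff ≠ 0 :=
    mul_ne_zero (Int.natCast_ne_zero.mpr (by omega))
      (Polynomial.leadingCoeff_ne_zero.mpr hPne)
  exact this h2.symm

end Stmt13Aux

/-- for P ∈ ℤ[X] of degree ≥ 2 there is a nonzero Q ∈ ℤ[X,Y,Z] with
P(X) − P(Y) + P(Z) − P(X − Y + Z) = Q(X,Y,Z)·(X − Y)·(Y − Z), and Q(n,m,Z) not
identically zero for all integers n, m. -/
theorem stmt13 (P : Polynomial ℤ) (hP : 2 ≤ P.natDegree) :
    ∃ Q : MvPolynomial (Fin 3) ℤ,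
      Polynomial.aeval (MvPolynomial.X 0 : MvPolynomial (Fin 3) ℤ) P -
          Polynomial.aeval (MvPolynomial.X 1 : MvPolynomial (Fin 3) ℤ) P +
          Polynomial.aeval (MvPolynomial.X 2 : MvPolynomial (Fin 3) ℤ) P -
          Polynomial.aeval
            (MvPolynomial.X 0 - MvPolynomial.X 1 + MvPolynomial.X 2 :
              MvPolynomial (Fin 3) ℤ) P =
        Q * (MvPolynomial.X 0 - MvPolynomial.X 1) * (MvPolynomial.X 1 - MvPolynomial.X 2) ∧
      Q ≠ 0 ∧
      ∀ n m : ℤ,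
        MvPolynomial.aeval
            (fun i : Fin 3 =>
              if i = 0 then Polynomial.C n else if i = 1 then Polynomial.C m
              else (Polynomial.X : Polynomial ℤ)) Q ≠ 0 := by
  have hnv : ∀ n m : ℤ,
      MvPolynomial.aeval
          (fun i : Fin 3 =>
            if i = 0 then Polynomial.C n else if i = 1 then Polynomial.C m
            else (Polynomial.X : Polynomial ℤ)) (Stmt13Aux.QQ P) ≠ 0 :=
    fun n m => Stmt13Aux.nonvanish P hP n m
  refine ⟨Stmt13Aux.QQ P, Stmt13Aux.QQ_identity P, ?_, hnv⟩
  intro h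
  exact hnv 0 0 (by rw [h, map_zero])
end

section
/- Let d ≥ 2 and let γ(n) = (P_1(n),…,P_d(n)) be a polynomial curve in ℤ^d with separated degrees whose first component P_1 is a linear polynomial. Then there exists a constant C = C(γ) > 0 such that for every integer N ≥ 1 and all finite sets E, F ⊆ ℤ^d, #{(x,n) ∈ F × {1,…,N} : x − γ(n) ∈ E} ≤ C · N^{1/3} · |E|^{2/3} · |F|^{2/3} (i.e., the restricted weak-type ℓ^{3/2} → ℓ^3 estimate ⟨𝒜_N 1_E, 1_F⟩ ≤ C N^{−2/3} |E|^{2/3} |F|^{2/3} holds without any ε-loss). -/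
open Polynomial Finset

lemma curv (Q : Polynomial ℤ) (hQ : 2 ≤ Q.natDegree) (c : ℤ) (hc : c ≠ 0) (w : ℤ) :
    Q - Q.comp (X - C c) - C w ≠ 0 := by
  intro h
  have hid : ∀ y : ℤ, Q.eval y = Q.eval (y - c) + w := by
    intro y
    have := congrArg (Polynomial.eval y) h
    simp [eval_comp] at this
    linarith [this]
  have key : ∀ m : ℤ, Q.eval (c * m) = Q.eval 0 + w * m := by
    intro m
    induction m using Int.induction_on with
    | zero => simp
    | succ k ih =>
        have := hid (c * (k + 1))
        have h2 : c * (k + 1) - c = c * k := by ring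
        rw [h2] at this
        rw [this, ih]; ring
    | pred k ih =>
        have := hid (c * (-k))
        have h2 : c * (-(k:ℤ)) - c = c * (-k - 1) := by ring
        rw [h2] at this
        push_cast at ih ⊢
        linarith [this, ih]
  have hpq : Q.comp (C c * X) = C (Q.eval 0) + C w * X := by
    apply Polynomial.funext
    intro r
    simp [eval_comp, key r]
  have h1 : (Q.comp (C c * X)).natDegree = Q.natDegree := by
    rw [natDegree_comp, natDegree_C_mul hc, natDegree_X, mul_one]
  have h2 : (C (Q.eval 0) + C w * X).natDegree ≤ 1 := by
    apply le_trans (natDegree_add_le _ _)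
    simp [natDegree_C_mul_le]
    exact le_trans (natDegree_mul_le) (by simp)
  rw [hpq, h2.antisymm ?_] at h1 <;> omega

lemma lin_eval (L : Polynomial ℤ) (hL : L.natDegree = 1) (m : ℤ) :
    L.eval m = L.coeff 1 * m + L.coeff 0 := by
  conv_lhs => rw [Polynomial.eval_eq_sum_range, hL]
  simp [Finset.sum_range_succ]; ring

lemma lin_lead (L : Polynomial ℤ) (hL : L.natDegree = 1) : L.coeff 1 ≠ 0 := by
  have : L ≠ 0 := fun h => by simp [h] at hL
  have := Polynomial.leadingCoeff_ne_zero.2 this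
  rwa [Polynomial.leadingCoeff, hL] at this

lemma fiber_bound_s14 (d : ℕ) (P : Fin d → Polynomial ℤ) (i0 i1 : Fin d)
    (h0 : (P i0).natDegree = 1) (h1 : 2 ≤ (P i1).natDegree)
    (A B : Finset (Fin d → ℤ)) (I : Finset ℤ) (e : (Fin d → ℤ) × (Fin d → ℤ)) :
    ((A ×ˢ (I ×ˢ I)).filter (fun p =>
        (p.2.1 ≠ p.2.2 ∧ (fun j => p.1 j - (P j).eval p.2.1) ∈ B ∧
          (fun j => p.1 j - (P j).eval p.2.2) ∈ B) ∧
        ((fun j => p.1 j - (P j).eval p.2.1), (fun j => p.1 j - (P j).eval p.2.2)) = e)).card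
      ≤ (P i1).natDegree := by
  classical
  set e1 := e.1
  set e2 := e.2
  set S := (A ×ˢ (I ×ˢ I)).filter (fun p =>
        (p.2.1 ≠ p.2.2 ∧ (fun j => p.1 j - (P j).eval p.2.1) ∈ B ∧
          (fun j => p.1 j - (P j).eval p.2.2) ∈ B) ∧
        ((fun j => p.1 j - (P j).eval p.2.1), (fun j => p.1 j - (P j).eval p.2.2)) = e) with hS
  rcases S.eq_empty_or_nonempty with hemp | ⟨p0, hp0⟩
  · simp [hemp]
  -- basic facts for members of S
  have a_ne := lin_lead (P i0) h0
  set a := (P i0).coeff 1 with ha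
  have memS : ∀ p ∈ S, p.2.1 ≠ p.2.2 ∧
      (∀ j, p.1 j - (P j).eval p.2.1 = e1 j) ∧ (∀ j, p.1 j - (P j).eval p.2.2 = e2 j) := by
    intro p hp
    rw [hS, Finset.mem_filter] at hp
    obtain ⟨-, ⟨hne, -, -⟩, heq⟩ := hp
    have h1' := congrArg Prod.fst heq
    have h2' := congrArg Prod.snd heq
    exact ⟨hne, fun j => congrFun h1' j, fun j => congrFun h2' j⟩
  -- the common difference c
  set c := p0.2.1 - p0.2.2 with hc
  have hcp : ∀ p ∈ S, p.2.1 - p.2.2 = c := by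
    intro p hp
    obtain ⟨-, k1, k2⟩ := memS p hp
    obtain ⟨-, l1, l2⟩ := memS p0 hp0
    have E1 := k1 i0; have E2 := k2 i0
    have F1 := l1 i0; have F2 := l2 i0
    rw [lin_eval (P i0) h0] at E1 E2 F1 F2
    have : a * (p.2.1 - p.2.2) = a * (p0.2.1 - p0.2.2) := by ring_nf; ring_nf at E1 E2 F1 F2; linarith
    exact mul_left_cancel₀ a_ne this
  have hc0 : c ≠ 0 := by
    obtain ⟨hne, -, -⟩ := memS p0 hp0
    simp only [hc, sub_ne_zero]; exact hne
  set w := e2 i1 - e1 i1 with hw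
  set R := P i1 - (P i1).comp (X - C c) - C w with hR
  have hRne : R ≠ 0 := curv _ h1 _ hc0 _
  have hroot : ∀ p ∈ S, R.eval p.2.1 = 0 := by
    intro p hp
    obtain ⟨-, k1, k2⟩ := memS p hp
    have E1 := k1 i1; have E2 := k2 i1
    have hn2 : p.2.2 = p.2.1 - c := by have := hcp p hp; linarith
    rw [hR]
    simp only [eval_sub, eval_comp, eval_X, eval_C, ← hn2]
    linarith
  -- injectivity of p ↦ p.2.1 on S
  have hinj : Set.InjOn (fun p : (Fin d → ℤ) × ℤ × ℤ => p.2.1) S := by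
    intro p hp q hq hpq
    simp only at hpq
    obtain ⟨-, k1, -⟩ := memS p hp
    obtain ⟨-, l1, -⟩ := memS q hq
    have hx : p.1 = q.1 := by
      funext j
      have := k1 j; have := l1 j
      rw [hpq] at *; linarith
    have h21 : p.2.1 = q.2.1 := hpq
    have h22 : p.2.2 = q.2.2 := by
      have := hcp p hp; have := hcp q hq
      omega
    exact Prod.ext hx (Prod.ext h21 h22)
  have hcard : S.card = (S.image fun p => p.2.1).card :=
    (Finset.card_image_of_injOn hinj).symm
  have hsub : S.image (fun p => p.2.1) ⊆ R.roots.toFinset := by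
    intro n hn
    rw [Finset.mem_image] at hn
    obtain ⟨p, hp, rfl⟩ := hn
    rw [Multiset.mem_toFinset, Polynomial.mem_roots hRne]
    exact hroot p hp
  have hdeg : R.natDegree ≤ (P i1).natDegree := by
    rw [hR]
    refine le_trans (natDegree_sub_le _ _) ?_
    simp only [natDegree_C, max_le_iff, Nat.zero_le, and_true]
    refine le_trans (natDegree_sub_le _ _) ?_
    rw [natDegree_comp, natDegree_X_sub_C, mul_one]
    simp
  calc S.card = (S.image fun p => p.2.1).card := hcard
    _ ≤ R.roots.toFinset.card := Finset.card_le_card hsub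
    _ ≤ Multiset.card R.roots := Multiset.toFinset_card_le _
    _ ≤ R.natDegree := Polynomial.card_roots' R
    _ ≤ (P i1).natDegree := hdeg

set_option linter.unusedSectionVars false in
section
variable {X : Type*} [DecidableEq X]

lemma sum_decomp (A : Finset X) (I : Finset ℤ) (q : X → ℤ → Prop) [DecidablePred fun z : X × ℤ => q z.1 z.2]
    [∀ x, DecidablePred (q x)] :
    ((A ×ˢ I).filter fun z => q z.1 z.2).card = ∑ x ∈ A, (I.filter (q x)).card := by
  simp only [Finset.card_filter, Finset.sum_product]

lemma sum_decomp3 (A : Finset X) (I : Finset ℤ) (r : X → ℤ → ℤ → Prop)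
    [DecidablePred fun p : X × ℤ × ℤ => r p.1 p.2.1 p.2.2]
    [∀ x, DecidablePred fun q : ℤ × ℤ => r x q.1 q.2] :
    ((A ×ˢ (I ×ˢ I)).filter fun p => r p.1 p.2.1 p.2.2).card
      = ∑ x ∈ A, ((I ×ˢ I).filter fun q => r x q.1 q.2).card := by
  simp only [Finset.card_filter, Finset.sum_product]

end

lemma quad_bound (d : ℕ) (P : Fin d → Polynomial ℤ) (i0 i1 : Fin d)
    (h0 : (P i0).natDegree = 1) (h1 : 2 ≤ (P i1).natDegree)
    (A B : Finset (Fin d → ℤ)) (I : Finset ℤ) :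
    ∑ x ∈ A, ((I.filter fun n => (fun j => x j - (P j).eval n) ∈ B).card) ^ 2
      ≤ (P i1).natDegree * B.card ^ 2 + ∑ x ∈ A, (I.filter fun n => (fun j => x j - (P j).eval n) ∈ B).card := by
  classical
  set D := (P i1).natDegree
  set s : (Fin d → ℤ) → ℕ := fun x => (I.filter fun n => (fun j => x j - (P j).eval n) ∈ B).card with hs
  set off : (Fin d → ℤ) → ℕ := fun x => ((I ×ˢ I).filter fun q =>
      q.1 ≠ q.2 ∧ (fun j => x j - (P j).eval q.1) ∈ B ∧ (fun j => x j - (P j).eval q.2) ∈ B).card with hoff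
  have step1 : ∀ x, (s x) ^ 2 ≤ s x + off x := by
    intro x
    set hits := I.filter fun n => (fun j => x j - (P j).eval n) ∈ B with hhits
    have hprod : (s x) ^ 2 = (hits ×ˢ hits).card := by
      rw [Finset.card_product]; rw [hs]; ring
    have hdec := Finset.card_filter_add_card_filter_not
      (s := hits ×ˢ hits) (p := fun q => q.1 = q.2)
    have hdiag : ((hits ×ˢ hits).filter fun q => q.1 = q.2).card ≤ s x := by
      apply Finset.card_le_card_of_injOn (fun q => q.1)
      · intro q hq
        simp only [Finset.mem_coe, Finset.mem_filter, Finset.mem_product] at hq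
        exact hq.1.1
      · intro q hq r hr hqr
        simp only [Finset.mem_coe, Finset.mem_filter] at hq hr
        exact Prod.ext hqr (by rw [← hq.2, ← hr.2]; exact hqr)
    have hoffle : ((hits ×ˢ hits).filter fun q => ¬ q.1 = q.2).card ≤ off x := by
      apply Finset.card_le_card
      intro q hq
      simp only [Finset.mem_filter, Finset.mem_product, hhits] at hq ⊢
      tauto
    omega
  have step2 : ∑ x ∈ A, off x ≤ D * B.card ^ 2 := by
    rw [hoff, ← sum_decomp3 A I (fun x n1 n2 =>
      n1 ≠ n2 ∧ (fun j => x j - (P j).eval n1) ∈ B ∧ (fun j => x j - (P j).eval n2) ∈ B)]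
    have : D * B.card ^ 2 = D * (B ×ˢ B).card := by rw [Finset.card_product]; ring
    rw [this]
    apply Finset.card_le_mul_card_image_of_maps_to
      (f := fun p : (Fin d → ℤ) × ℤ × ℤ =>
        ((fun j => p.1 j - (P j).eval p.2.1), (fun j => p.1 j - (P j).eval p.2.2)))
    · intro p hp
      simp only [Finset.mem_filter] at hp
      simp only [Finset.mem_product]
      exact ⟨hp.2.2.1, hp.2.2.2⟩
    · intro b hb
      rw [Finset.filter_filter]
      exact fiber_bound_s14 d P i0 i1 h0 h1 A B I b
  calc ∑ x ∈ A, (s x) ^ 2 ≤ ∑ x ∈ A, (s x + off x) := Finset.sum_le_sum fun x _ => step1 x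
    _ = ∑ x ∈ A, off x + ∑ x ∈ A, s x := by rw [Finset.sum_add_distrib]; ring
    _ ≤ D * B.card ^ 2 + ∑ x ∈ A, s x := by omega

lemma triv1 (d : ℕ) (P : Fin d → Polynomial ℤ)
    (A B : Finset (Fin d → ℤ)) (I : Finset ℤ) :
    ((A ×ˢ I).filter fun z => (fun j => z.1 j - (P j).eval z.2) ∈ B).card
      ≤ B.card * I.card := by
  classical
  rw [← Finset.card_product]
  apply Finset.card_le_card_of_injOn (fun z => ((fun j => z.1 j - (P j).eval z.2), z.2))
  · intro z hz
    simp only [Finset.mem_coe, Finset.mem_filter, Finset.mem_product] at hz ⊢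
    exact ⟨hz.2, hz.1.2⟩
  · intro z hz y hy hzy
    simp only [Prod.mk.injEq] at hzy
    obtain ⟨h1, h2⟩ := hzy
    refine Prod.ext ?_ h2
    funext j
    have := congrFun h1 j
    simp only [h2] at this ⊢
    linarith

lemma triv2 (d : ℕ) (P : Fin d → Polynomial ℤ)
    (A B : Finset (Fin d → ℤ)) (I : Finset ℤ) :
    ((A ×ˢ I).filter fun z => (fun j => z.1 j - (P j).eval z.2) ∈ B).card
      ≤ A.card * I.card := by
  classical
  rw [← Finset.card_product]
  exact Finset.card_filter_le _ _

lemma swap_count (d : ℕ) (P : Fin d → Polynomial ℤ)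
    (A B : Finset (Fin d → ℤ)) (I : Finset ℤ) :
    ((A ×ˢ I).filter fun z => (fun j => z.1 j - (P j).eval z.2) ∈ B).card
      = ((B ×ˢ I).filter fun z => (fun j => z.1 j - (-P j).eval z.2) ∈ A).card := by
  classical
  apply Finset.card_nbij'
    (fun z : (Fin d → ℤ) × ℤ => ((fun j => z.1 j - (P j).eval z.2), z.2))
    (fun z : (Fin d → ℤ) × ℤ => ((fun j => z.1 j - (-P j).eval z.2), z.2))
  · intro z hz
    simp only [Finset.mem_coe, Finset.mem_filter, Finset.mem_product] at hz ⊢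
    refine ⟨⟨hz.2, hz.1.2⟩, ?_⟩
    have he : (fun j => (z.1 j - (P j).eval z.2) - (-P j).eval z.2) = z.1 := by
      funext j; simp
    simpa [he] using hz.1.1
  · intro z hz
    simp only [Finset.mem_coe, Finset.mem_filter, Finset.mem_product] at hz ⊢
    refine ⟨⟨hz.2, hz.1.2⟩, ?_⟩
    have he : (fun j => (z.1 j - (-P j).eval z.2) - (P j).eval z.2) = z.1 := by
      funext j; simp
    simpa [he] using hz.1.1
  · intro z hz
    refine Prod.ext ?_ rfl
    funext j; simp
  · intro z hz
    refine Prod.ext ?_ rfl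
    funext j; simp

lemma numeric_step (D t n e f : ℝ) (hD : 2 ≤ D) (ht : 0 ≤ t) (hn : 1 ≤ n) (he : 1 ≤ e)
    (hef : e ≤ f) (h2 : t^2 ≤ f*(D*e^2 + t)) (h3 : t ≤ e*n) :
    t^3 ≤ (2*D+1)*n*e^2*f^2 := by
  have hf : 1 ≤ f := le_trans he hef
  have he0 : (0:ℝ) ≤ e := by linarith
  have hf0 : (0:ℝ) ≤ f := by linarith
  have hn0 : (0:ℝ) ≤ n := by linarith
  have hD0 : (0:ℝ) ≤ D := by linarith
  have h4 : t^3 ≤ t * (f*(D*e^2 + t)) := by nlinarith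
  have h6 : f*t^2 ≤ f*(f*(D*e^2 + t)) := by nlinarith
  have h7 : t^3 ≤ f*D*e^2*t + f^2*D*e^2 + f^2*t := by nlinarith
  have g1 : D*n*(e^2*e)*f ≤ D*n*(e^2*f)*f := by gcongr
  have g2 : D*e^2*f^2 ≤ D*e^2*(n*f^2) := by
    nlinarith [mul_le_mul_of_nonneg_left hn (show (0:ℝ) ≤ D*e^2*f^2 by positivity)]
  have g3 : n*(e*1)*f^2 ≤ n*(e*e)*f^2 := by gcongr
  calc t^3 ≤ f*D*e^2*t + f^2*D*e^2 + f^2*t := h7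
    _ ≤ f*D*e^2*(e*n) + f^2*D*e^2 + f^2*(e*n) := by gcongr <;> positivity
    _ = D*n*(e^2*e)*f + D*e^2*f^2 + n*(e*1)*f^2 := by ring
    _ ≤ D*n*(e^2*f)*f + D*e^2*(n*f^2) + n*(e*e)*f^2 := by linarith
    _ = (2*D+1)*n*e^2*f^2 := by ring

lemma cube_root_le (t R : ℝ) (hR : 0 ≤ R) (h : t^3 ≤ R^3) : t ≤ R :=
  le_of_pow_le_pow_left₀ (by norm_num) hR h

-- master quadratic inequality in ℕ (combining sum_decomp, quad_bound, Cauchy-Schwarz)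
lemma master (d : ℕ) (P : Fin d → Polynomial ℤ) (i0 i1 : Fin d)
    (h0 : (P i0).natDegree = 1) (h1 : 2 ≤ (P i1).natDegree)
    (A B : Finset (Fin d → ℤ)) (I : Finset ℤ) :
    (((A ×ˢ I).filter fun z => (fun j => z.1 j - (P j).eval z.2) ∈ B).card) ^ 2
      ≤ A.card * ((P i1).natDegree * B.card ^ 2
          + ((A ×ˢ I).filter fun z => (fun j => z.1 j - (P j).eval z.2) ∈ B).card) := by
  classical
  rw [sum_decomp A I (fun x n => (fun j => x j - (P j).eval n) ∈ B)]
  calc (∑ x ∈ A, (I.filter fun n => (fun j => x j - (P j).eval n) ∈ B).card) ^ 2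
      ≤ A.card * ∑ x ∈ A, ((I.filter fun n => (fun j => x j - (P j).eval n) ∈ B).card) ^ 2 :=
        sq_sum_le_card_mul_sum_sq
    _ ≤ A.card * ((P i1).natDegree * B.card ^ 2
          + ∑ x ∈ A, (I.filter fun n => (fun j => x j - (P j).eval n) ∈ B).card) :=
        Nat.mul_le_mul_left _ (quad_bound d P i0 i1 h0 h1 A B I)

/-- ε-free restricted weak-type ℓ^{3/2} → ℓ^3 estimate for
discrete averages along a polynomial curve with separated degrees whose first
component is linear, in dimension d ≥ 2. -/
theorem stmt14 (d : ℕ) (hd : 2 ≤ d) (P : Fin d → Polynomial ℤ)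
    (hnc : ∀ j, 0 < (P j).natDegree)
    (hsep : ∀ i j : Fin d, i < j → (P i).natDegree < (P j).natDegree)
    (hlin : (P ⟨0, by omega⟩).natDegree = 1) :
    ∃ C : ℝ, 0 < C ∧ ∀ N : ℕ, 1 ≤ N → ∀ E F : Finset (Fin d → ℤ),
      (((F ×ˢ Finset.Icc (1:ℤ) (N:ℤ)).filter
          (fun z => (fun j => z.1 j - (P j).eval z.2) ∈ E)).card : ℝ) ≤
        C * (N:ℝ) ^ ((1:ℝ)/3) * (E.card:ℝ) ^ ((2:ℝ)/3) * (F.card:ℝ) ^ ((2:ℝ)/3) := by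
  classical
  have h0' : 0 < d := by omega
  set i0 : Fin d := ⟨0, by omega⟩
  set i1 : Fin d := ⟨1, by omega⟩
  have h0 : (P i0).natDegree = 1 := hlin
  have h1 : 2 ≤ (P i1).natDegree := by
    have := hsep i0 i1 (by simp [i0, i1, Fin.mk_lt_mk])
    omega
  set D : ℕ := (P i1).natDegree with hD
  refine ⟨2 * D + 1, by positivity, ?_⟩
  intro N hN E F
  set I : Finset ℤ := Finset.Icc (1:ℤ) (N:ℤ) with hI
  have hIcard : I.card = N := by
    rw [hI, Int.card_Icc]
    omega
  set T : ℕ := ((F ×ˢ I).filter fun z => (fun j => z.1 j - (P j).eval z.2) ∈ E).card with hT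
  by_cases hE0 : E = ∅
  · have : T = 0 := by
      rw [hT, Finset.card_eq_zero, Finset.filter_eq_empty_iff]
      intro z _
      simp [hE0]
    rw [this]
    simp only [Nat.cast_zero]
    positivity
  by_cases hF0 : F = ∅
  · have : T = 0 := by
      rw [hT, Finset.card_eq_zero, hF0]
      simp
    rw [this]
    simp only [Nat.cast_zero]
    positivity
  have hE1 : 1 ≤ E.card := Finset.card_pos.2 (Finset.nonempty_iff_ne_empty.2 hE0)
  have hF1 : 1 ≤ F.card := Finset.card_pos.2 (Finset.nonempty_iff_ne_empty.2 hF0)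
  -- real variables
  set t : ℝ := (T : ℝ) with ht
  set e : ℝ := (E.card : ℝ) with he
  set f : ℝ := (F.card : ℝ) with hf
  have ht0 : 0 ≤ t := by positivity
  have he1 : (1:ℝ) ≤ e := by rw [he]; exact_mod_cast hE1
  have hf1 : (1:ℝ) ≤ f := by rw [hf]; exact_mod_cast hF1
  have hn1 : (1:ℝ) ≤ (N:ℝ) := by exact_mod_cast hN
  have hD2 : (2:ℝ) ≤ (D:ℝ) := by exact_mod_cast h1
  -- cube bound
  have hcube : t ^ 3 ≤ (2*(D:ℝ)+1) * (N:ℝ) * e^2 * f^2 := by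
    rcases le_total E.card F.card with hef | hfe
    · -- e ≤ f : use orientation (A,B) = (F,E)
      have hm := master d P i0 i1 h0 h1 F E I
      have htriv := triv1 d P F E I
      rw [hIcard] at htriv
      apply numeric_step (D:ℝ) t (N:ℝ) e f hD2 ht0 hn1 he1 (by rw [he, hf]; exact_mod_cast hef)
      · rw [ht, he, hf]
        push_cast
        exact_mod_cast Nat.cast_le.2 hm
      · rw [ht, he]
        exact_mod_cast Nat.cast_le.2 htriv
    · -- f ≤ e : swap
      have hswap : T = ((E ×ˢ I).filter fun z =>
          (fun j => z.1 j - ((fun j => -P j) j).eval z.2) ∈ F).card := by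
        rw [hT]; exact swap_count d P F E I
      have h0n : ((fun j => -P j) i0).natDegree = 1 := by simpa [natDegree_neg] using h0
      have h1n : 2 ≤ ((fun j => -P j) i1).natDegree := by simpa [natDegree_neg] using h1
      have hm := master d (fun j => -P j) i0 i1 h0n h1n E F I
      have htriv := triv1 d (fun j => -P j) E F I
      rw [hIcard] at htriv
      rw [← hswap] at hm htriv
      have hDn : ((fun j => -P j) i1).natDegree = D := by simp [natDegree_neg, hD]
      rw [hDn] at hm
      have key := numeric_step (D:ℝ) t (N:ℝ) f e hD2 ht0 hn1 hf1 (by rw [he, hf]; exact_mod_cast hfe)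
        (by rw [ht, he, hf]; push_cast; exact_mod_cast Nat.cast_le.2 hm)
        (by rw [ht, hf]; exact_mod_cast Nat.cast_le.2 htriv)
      calc t^3 ≤ (2*(D:ℝ)+1) * (N:ℝ) * f^2 * e^2 := key
        _ = (2*(D:ℝ)+1) * (N:ℝ) * e^2 * f^2 := by ring
  -- conclude via cube root
  have hC1 : (1:ℝ) ≤ 2*(D:ℝ)+1 := by linarith
  apply cube_root_le
  · positivity
  calc t^3 ≤ (2*(D:ℝ)+1) * (N:ℝ) * e^2 * f^2 := hcube
    _ ≤ (2*(D:ℝ)+1)^3 * (N:ℝ) * e^2 * f^2 := by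
        have hC0 : (0:ℝ) ≤ 2*(D:ℝ)+1 := by linarith
        have hC2 : (1:ℝ) ≤ (2*(D:ℝ)+1)^2 := by nlinarith
        have hCC : (2*(D:ℝ)+1) ≤ (2*(D:ℝ)+1)^3 := by nlinarith [mul_le_mul_of_nonneg_left hC2 hC0]
        gcongr
    _ = ((2*(D:ℝ)+1) * (N:ℝ)^((1:ℝ)/3) * e^((2:ℝ)/3) * f^((2:ℝ)/3))^3 := by
        rw [mul_pow, mul_pow, mul_pow]
        rw [← Real.rpow_natCast ((N:ℝ)^((1:ℝ)/3)) 3, ← Real.rpow_natCast (e^((2:ℝ)/3)) 3,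
            ← Real.rpow_natCast (f^((2:ℝ)/3)) 3,
            ← Real.rpow_mul (by positivity), ← Real.rpow_mul (by positivity),
            ← Real.rpow_mul (by positivity)]
        norm_num
end
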